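/- arXiv:2008.03819 — 6 statements merged into one kernel-verified Lean document; each statement's English description precedes it below -/
import Mathlib

section
/- Let C be a pointed, spanning polyhedral cone in E = ℝⁿ and let D ⊆ E be a downset. Then D is the union of the coprincipal downsets determined by its cogenerators: D = ⋃ (a + τ − σ° − C), where the union runs over all pairs of faces τ ⊆ σ of C and all points a ∈ E that are cogenerators of D along τ with nadir σ. -/
open Pointwise

/-- A polyhedral cone in `ℝⁿ`: an intersection of finitely many closed linear half-spaces. -/
def IsPolyCone {n : ℕ} (C : Set (Fin n → ℝ)) : Prop :=
  ∃ (m : ℕ) (ℓ : Fin m → ((Fin n → ℝ) →ₗ[ℝ] ℝ)), C = {x | ∀ i, 0 ≤ ℓ i x}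

/-- A face of a cone `C`: a subset of `C` containing `0`, closed under addition, and such
that whenever `x, y ∈ C` and `x + y` lies in the subset, both `x` and `y` do. -/
def IsConeFace {M : Type*} [AddCommMonoid M] (σ C : Set M) : Prop :=
  σ ⊆ C ∧ (0 : M) ∈ σ ∧ (∀ x ∈ σ, ∀ y ∈ σ, x + y ∈ σ) ∧
    ∀ x ∈ C, ∀ y ∈ C, x + y ∈ σ → x ∈ σ ∧ y ∈ σ

/-- A downset for the partial order `x ≼ y ↔ y - x ∈ C`. -/
def IsDownset {n : ℕ} (C D : Set (Fin n → ℝ)) : Prop :=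
  ∀ x y : Fin n → ℝ, y ∈ D → y - x ∈ C → x ∈ D

/-- The upper boundary downset `D^σ = {a | a - σ° ⊆ D}`. -/
def upSet {n : ℕ} (D σ : Set (Fin n → ℝ)) : Set (Fin n → ℝ) :=
  {a | ∀ s ∈ intrinsicInterior ℝ σ, a - s ∈ D}

/-- `a` is a cogenerator of the downset `D` along the face `τ` with nadir `σ`:
`(a + C) ∩ D^σ = a + τ` and no face `σ''` with `τ ⊆ σ'' ⊊ σ` satisfies `a - σ''° ⊆ D`. -/
def IsCogen {n : ℕ} (C D τ σ : Set (Fin n → ℝ)) (a : Fin n → ℝ) : Prop :=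
  (({a} + C) ∩ upSet D σ = {a} + τ) ∧
  ∀ σ'' : Set (Fin n → ℝ), IsConeFace σ'' C → τ ⊆ σ'' → σ'' ⊂ σ →
    ¬ (∀ s ∈ intrinsicInterior ℝ σ'', a - s ∈ D)

/-- A `σ`-vicinity of a point `p` of `E ⧸ span τ`: the image under the quotient map of
`u + σ° + C` for some `u` admitting a representative `w` of `p` with `w - u ∈ σ°`. -/
def IsVic {n : ℕ} (C σ τ : Set (Fin n → ℝ))
    (p : (Fin n → ℝ) ⧸ Submodule.span ℝ τ)
    (V : Set ((Fin n → ℝ) ⧸ Submodule.span ℝ τ)) : Prop :=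
  ∃ u w : Fin n → ℝ, (Submodule.span ℝ τ).mkQ w = p ∧
    w - u ∈ intrinsicInterior ℝ σ ∧
    V = (Submodule.span ℝ τ).mkQ '' ({u} + intrinsicInterior ℝ σ + C)

namespace PolyAux

variable {n m : ℕ} (ℓ : Fin m → ((Fin n → ℝ) →ₗ[ℝ] ℝ))

def Kc : Set (Fin n → ℝ) := {x | ∀ i, 0 ≤ ℓ i x}

def ZS (y : Fin n → ℝ) : Set (Fin m) := {i | ℓ i y = 0}

def FJ (J : Set (Fin m)) : Set (Fin n → ℝ) :=
  {y | (∀ i, 0 ≤ ℓ i y) ∧ ∀ i ∈ J, ℓ i y = 0}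

def IFc (σ : Set (Fin n → ℝ)) : Set (Fin m) := {i | ∀ y ∈ σ, ℓ i y = 0}

variable {ℓ}

lemma Kc_zero : (0 : Fin n → ℝ) ∈ Kc ℓ := fun i => by simp

lemma Kc_add {y z : Fin n → ℝ} (hy : y ∈ Kc ℓ) (hz : z ∈ Kc ℓ) : y + z ∈ Kc ℓ :=
  fun i => by simpa using add_nonneg (hy i) (hz i)

lemma Kc_smul {y : Fin n → ℝ} {t : ℝ} (hy : y ∈ Kc ℓ) (ht : 0 ≤ t) : t • y ∈ Kc ℓ :=
  fun i => by simpa using mul_nonneg ht (hy i)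

lemma FJ_subset_Kc {J : Set (Fin m)} : FJ ℓ J ⊆ Kc ℓ := fun _ h => h.1

lemma FJ_antitone {J J' : Set (Fin m)} (h : J ⊆ J') : FJ ℓ J' ⊆ FJ ℓ J :=
  fun y hy => ⟨hy.1, fun i hi => hy.2 i (h hi)⟩

lemma FJ_smul {J : Set (Fin m)} {y : Fin n → ℝ} {t : ℝ} (hy : y ∈ FJ ℓ J) (ht : 0 ≤ t) :
    t • y ∈ FJ ℓ J :=
  ⟨fun i => Kc_smul hy.1 ht i, fun i hi => by simp [map_smul, hy.2 i hi]⟩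

lemma isConeFace_FJ (J : Set (Fin m)) : IsConeFace (FJ ℓ J) (Kc ℓ) := by
  refine ⟨FJ_subset_Kc, ⟨fun i => by simp, fun i _ => by simp⟩, ?_, ?_⟩
  · rintro y hy z hz
    exact ⟨fun i => by simpa using add_nonneg (hy.1 i) (hz.1 i),
      fun i hi => by simp [map_add, hy.2 i hi, hz.2 i hi]⟩
  · rintro y hy z hz hyz
    constructor
    · refine ⟨hy, fun i hi => ?_⟩
      have := hyz.2 i hi
      rw [map_add] at this
      linarith [hy i, hz i]
    · refine ⟨hz, fun i hi => ?_⟩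
      have := hyz.2 i hi
      rw [map_add] at this
      linarith [hy i, hz i]

lemma face_nsmul {σ : Set (Fin n → ℝ)} (hσ : IsConeFace σ (Kc ℓ)) {y : Fin n → ℝ}
    (hy : y ∈ σ) (k : ℕ) : (k : ℝ) • y ∈ σ := by
  induction k with
  | zero => simpa using hσ.2.1
  | succ k ih =>
      have := hσ.2.2.1 _ ih _ hy
      have h : ((k : ℝ) + 1) • y = (k : ℝ) • y + y := by
        rw [add_smul, one_smul]
      rw [Nat.cast_succ, h]
      exact this

lemma face_smul {σ : Set (Fin n → ℝ)} (hσ : IsConeFace σ (Kc ℓ)) {y : Fin n → ℝ} {t : ℝ}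
    (hy : y ∈ σ) (ht : 0 ≤ t) : t • y ∈ σ := by
  obtain ⟨k, hk⟩ := exists_nat_ge t
  have hyK : y ∈ Kc ℓ := hσ.1 hy
  have h1 : t • y ∈ Kc ℓ := Kc_smul hyK ht
  have h2 : ((k : ℝ) - t) • y ∈ Kc ℓ := Kc_smul hyK (by linarith)
  have hsum : t • y + ((k : ℝ) - t) • y ∈ σ := by
    have : t • y + ((k : ℝ) - t) • y = (k : ℝ) • y := by
      rw [← add_smul]; ring_nf
    rw [this]; exact face_nsmul hσ hy k
  exact (hσ.2.2.2 _ h1 _ h2 hsum).1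

variable (ℓ) in
open Classical in
noncomputable def vpt (σ : Set (Fin n → ℝ)) : Fin n → ℝ :=
  ∑ i : Fin m, (if h : ∃ y, y ∈ σ ∧ 0 < ℓ i y then h.choose else 0)

lemma vpt_mem {σ : Set (Fin n → ℝ)} (hσ : IsConeFace σ (Kc ℓ)) : vpt ℓ σ ∈ σ := by
  refine Finset.sum_induction _ (· ∈ σ) (fun a b ha hb => hσ.2.2.1 a ha b hb) hσ.2.1 ?_
  intro i _
  by_cases h : ∃ y, y ∈ σ ∧ 0 < ℓ i y
  · simpa [h] using h.choose_spec.1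
  · simpa [h] using hσ.2.1

lemma ℓ_vpt_pos {σ : Set (Fin n → ℝ)} (hσ : IsConeFace σ (Kc ℓ)) {i : Fin m}
    (hi : i ∉ IFc ℓ σ) : 0 < ℓ i (vpt ℓ σ) := by
  have hex : ∃ y, y ∈ σ ∧ 0 < ℓ i y := by
    by_contra h
    push_neg at h
    exact hi fun y hy => le_antisymm (h y hy) (hσ.1 hy i)
  rw [vpt, map_sum]
  refine Finset.sum_pos' (fun j _ => ?_) ⟨i, Finset.mem_univ i, ?_⟩
  · by_cases h : ∃ y, y ∈ σ ∧ 0 < ℓ j y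
    · simpa [h] using hσ.1 h.choose_spec.1 i
    · simp [h]
  · simpa [hex] using hex.choose_spec.2

lemma ℓ_vpt_zero {σ : Set (Fin n → ℝ)} (hσ : IsConeFace σ (Kc ℓ)) {i : Fin m}
    (hi : i ∈ IFc ℓ σ) : ℓ i (vpt ℓ σ) = 0 :=
  hi _ (vpt_mem hσ)

/-- key finite positivity helper -/
lemma exists_delta (S : Finset (Fin m)) (f g : Fin m → ℝ) (hf : ∀ j ∈ S, 0 < f j) :
    ∃ δ : ℝ, 0 < δ ∧ ∀ j ∈ S, δ * g j < f j := by
  classical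
  induction S using Finset.induction with
  | empty => exact ⟨1, one_pos, by simp⟩
  | @insert a S ha ih =>
      obtain ⟨δ, hδ, hδS⟩ := ih (fun j hj => hf j (Finset.mem_insert_of_mem hj))
      have hfa : 0 < f a := hf a (Finset.mem_insert_self a S)
      refine ⟨min δ (f a / (|g a| + 1)), lt_min hδ (by positivity), ?_⟩
      intro j hj
      have hmpos : 0 < min δ (f a / (|g a| + 1)) := lt_min hδ (by positivity)
      rcases Finset.mem_insert.1 hj with rfl | hj
      · rcases le_or_gt (g j) 0 with h | h
        · nlinarith
        · have h2 : min δ (f j / (|g j| + 1)) ≤ f j / (|g j| + 1) := min_le_right _ _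
          have habs : g j ≤ |g j| := le_abs_self _
          have : (f j / (|g j| + 1)) * (|g j| + 1) = f j := by
            field_simp
          nlinarith [abs_nonneg (g j)]
      · rcases le_or_gt (g j) 0 with h | h
        · have := mul_nonpos_of_nonneg_of_nonpos hmpos.le h
          linarith [hf j (Finset.mem_insert_of_mem hj)]
        · have h2 : min δ (f a / (|g a| + 1)) ≤ δ := min_le_left _ _
          nlinarith [hδS j hj]

lemma IFc_antitone {σ ψ : Set (Fin n → ℝ)} (h : σ ⊆ ψ) : IFc ℓ ψ ⊆ IFc ℓ σ :=
  fun _ hi y hy => hi y (h hy)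

lemma subset_IFc_FJ (J : Set (Fin m)) : J ⊆ IFc ℓ (FJ ℓ J) :=
  fun i hi y hy => hy.2 i hi

lemma mem_FJ_IFc {σ : Set (Fin n → ℝ)} (hσ : σ ⊆ Kc ℓ) {y : Fin n → ℝ} (hy : y ∈ σ) :
    y ∈ FJ ℓ (IFc ℓ σ) := ⟨hσ hy, fun i hi => hi y hy⟩

/-- every abstract face is a coordinate face -/
lemma face_eq_FJ {σ : Set (Fin n → ℝ)} (hσ : IsConeFace σ (Kc ℓ)) :
    σ = FJ ℓ (IFc ℓ σ) := by
  classical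
  apply Set.Subset.antisymm (fun y hy => mem_FJ_IFc hσ.1 hy)
  intro y hy
  obtain ⟨δ, hδ, hδlt⟩ := exists_delta (Finset.univ.filter (· ∉ IFc ℓ σ))
    (fun j => ℓ j (vpt ℓ σ)) (fun j => ℓ j y)
    (fun j hj => ℓ_vpt_pos hσ (by simpa using hj))
  have h1 : vpt ℓ σ - δ • y ∈ Kc ℓ := by
    intro i
    by_cases hi : i ∈ IFc ℓ σ
    · simp [map_sub, map_smul, ℓ_vpt_zero hσ hi, hy.2 i hi]
    · have := hδlt i (by simpa using hi)
      simp only [map_sub, map_smul, smul_eq_mul]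
      linarith
  have h2 : δ • y ∈ Kc ℓ := Kc_smul hy.1 hδ.le
  have h3 : vpt ℓ σ - δ • y + δ • y ∈ σ := by
    simpa using vpt_mem hσ
  have h4 : δ • y ∈ σ := (hσ.2.2.2 _ h1 _ h2 h3).2
  have : δ⁻¹ • (δ • y) ∈ σ := face_smul hσ h4 (by positivity)
  simpa [smul_smul, inv_mul_cancel₀ hδ.ne'] using this

lemma IFc_FJ_ZS {c : Fin n → ℝ} (hc : c ∈ Kc ℓ) : IFc ℓ (FJ ℓ (ZS ℓ c)) = ZS ℓ c := by
  apply Set.Subset.antisymm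
  · intro i hi
    exact hi c ⟨hc, fun j hj => hj⟩
  · exact subset_IFc_FJ _

lemma ZS_add {c d : Fin n → ℝ} (hc : c ∈ Kc ℓ) (hd : d ∈ Kc ℓ) :
    ZS ℓ (c + d) = ZS ℓ c ∩ ZS ℓ d := by
  ext i
  simp only [ZS, Set.mem_setOf_eq, Set.mem_inter_iff, map_add]
  constructor
  · intro h; constructor <;> linarith [hc i, hd i]
  · rintro ⟨h1, h2⟩; rw [h1, h2]; ring

/-- coordinate description of the intrinsic interior of a face -/
lemma intrinsic_face_char {σ : Set (Fin n → ℝ)} (hσ : IsConeFace σ (Kc ℓ)) :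
    intrinsicInterior ℝ σ = {y | y ∈ σ ∧ ∀ i ∉ IFc ℓ σ, 0 < ℓ i y} := by
  classical
  ext y
  constructor
  · intro hy
    refine ⟨intrinsicInterior_subset hy, ?_⟩
    intro i hi
    have hw : ∃ w, w ∈ σ ∧ 0 < ℓ i w := by
      by_contra h
      push_neg at h
      exact hi fun w hwσ => le_antisymm (h w hwσ) (hσ.1 hwσ i)
    obtain ⟨w, hwσ, hwi⟩ := hw
    rw [mem_intrinsicInterior] at hy
    obtain ⟨z, hz, hzy⟩ := hy
    have hy_mem : y ∈ affineSpan ℝ σ := hzy ▸ z.2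
    have hw_mem : w ∈ affineSpan ℝ σ := subset_affineSpan ℝ σ hwσ
    have h0_mem : (0 : Fin n → ℝ) ∈ affineSpan ℝ σ := subset_affineSpan ℝ σ hσ.2.1
    set f : ℝ → (affineSpan ℝ σ : Set (Fin n → ℝ)) :=
      fun ε => ⟨y - ε • w, by
        have := AffineSubspace.smul_vsub_vadd_mem (affineSpan ℝ σ) ε h0_mem hw_mem hy_mem
        simpa [vsub_eq_sub, vadd_eq_add, smul_sub, sub_eq_add_neg, add_comm] using this⟩ with hf
    have hcont : Continuous f := by
      apply Continuous.subtype_mk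
      exact continuous_const.sub (continuous_id.smul continuous_const)
    have hopen : IsOpen (f ⁻¹' (interior (Subtype.val ⁻¹' σ))) :=
      hcont.isOpen_preimage _ isOpen_interior
    have h0in : (0 : ℝ) ∈ f ⁻¹' (interior (Subtype.val ⁻¹' σ)) := by
      have : f 0 = z := by
        apply Subtype.ext
        simp [hf, hzy]
      rw [Set.mem_preimage, this]; exact hz
    obtain ⟨r, hr, hball⟩ := Metric.isOpen_iff.1 hopen 0 h0in
    have hrin : (r / 2 : ℝ) ∈ f ⁻¹' (interior (Subtype.val ⁻¹' σ)) := by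
      apply hball
      have : dist (r / 2 : ℝ) 0 < r := by
        rw [Real.dist_eq, sub_zero, abs_of_nonneg (by linarith : (0:ℝ) ≤ r / 2)]
        linarith
      exact this
    have hmem : y - (r / 2) • w ∈ σ := by
      have h : f (r / 2) ∈ Subtype.val ⁻¹' σ := interior_subset hrin
      simpa [hf] using h
    have := hσ.1 hmem i
    simp only [map_sub, map_smul, smul_eq_mul] at this
    nlinarith
  · rintro ⟨hyσ, hypos⟩
    rw [mem_intrinsicInterior]
    refine ⟨⟨y, subset_affineSpan ℝ σ hyσ⟩, ?_, rfl⟩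
    rw [mem_interior_iff_mem_nhds, Metric.mem_nhds_iff]
    obtain ⟨δ, hδ, hδlt⟩ := exists_delta (Finset.univ.filter (· ∉ IFc ℓ σ))
      (fun i => ℓ i y) (fun i => ‖LinearMap.toContinuousLinearMap (ℓ i)‖)
      (fun i hi => hypos i (by simpa using hi))
    refine ⟨δ, hδ, ?_⟩
    rintro ⟨z, hzspan⟩ hzball
    have hdist : ‖z - y‖ < δ := by
      have := hzball
      simpa [Metric.mem_ball, Subtype.dist_eq, dist_eq_norm] using this
    show z ∈ σ
    have hzero : ∀ i ∈ IFc ℓ σ, ℓ i z = 0 := by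
      intro i hi
      set W : Submodule ℝ (Fin n → ℝ) := ⨅ j ∈ IFc ℓ σ, LinearMap.ker (ℓ j) with hW
      have hσW : σ ⊆ (W.toAffineSubspace : Set (Fin n → ℝ)) := by
        intro u hu
        show u ∈ W
        rw [hW]
        simp only [Submodule.mem_iInf, LinearMap.mem_ker]
        exact fun j hj => hj u hu
      have hle := affineSpan_le.2 hσW
      have hzW : z ∈ W := hle hzspan
      rw [hW] at hzW
      simp only [Submodule.mem_iInf, LinearMap.mem_ker] at hzW
      exact hzW i hi
    have hbound : ∀ i, |ℓ i (z - y)| ≤ ‖LinearMap.toContinuousLinearMap (ℓ i)‖ * ‖z - y‖ := by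
      intro i
      have := (LinearMap.toContinuousLinearMap (ℓ i)).le_opNorm (z - y)
      simpa using this
    rw [face_eq_FJ hσ]
    constructor
    · intro i
      by_cases hi : i ∈ IFc ℓ σ
      · rw [hzero i hi]
      · have h1 := hδlt i (by simpa using hi)
        have h2 := hbound i
        have h3 : ℓ i z = ℓ i y + ℓ i (z - y) := by rw [map_sub]; ring
        have h4 : ‖LinearMap.toContinuousLinearMap (ℓ i)‖ * ‖z - y‖ ≤
            ‖LinearMap.toContinuousLinearMap (ℓ i)‖ * δ :=
          mul_le_mul_of_nonneg_left hdist.le (norm_nonneg _)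
        have h5 : -(ℓ i (z - y)) ≤ |ℓ i (z - y)| := neg_le_abs _
        nlinarith
    · exact hzero

def IsDownset' {n : ℕ} (C D : Set (Fin n → ℝ)) : Prop :=
  ∀ x y : Fin n → ℝ, y ∈ D → y - x ∈ C → x ∈ D

def upSet' {n : ℕ} (D σ : Set (Fin n → ℝ)) : Set (Fin n → ℝ) :=
  {a | ∀ s ∈ intrinsicInterior ℝ σ, a - s ∈ D}

variable {D : Set (Fin n → ℝ)}

lemma upSet_down (hD : IsDownset' (Kc ℓ) D) {σ : Set (Fin n → ℝ)} {y z : Fin n → ℝ}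
    (hy : y ∈ upSet' D σ) (hc : y - z ∈ Kc ℓ) : z ∈ upSet' D σ := by
  intro s hs
  refine hD _ _ (hy s hs) ?_
  have : y - s - (z - s) = y - z := by ring
  rw [this]
  exact hc

lemma mem_upSet_char {σ : Set (Fin n → ℝ)} (hσ : IsConeFace σ (Kc ℓ)) {a : Fin n → ℝ} :
    a ∈ upSet' D σ ↔ ∀ s ∈ σ, (∀ i ∉ IFc ℓ σ, 0 < ℓ i s) → a - s ∈ D := by
  unfold upSet'
  rw [Set.mem_setOf_eq]
  constructor
  · intro h s hs hpos
    exact h s (by rw [intrinsic_face_char hσ]; exact ⟨hs, hpos⟩)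
  · intro h s hs
    rw [intrinsic_face_char hσ] at hs
    exact h s hs.1 hs.2

lemma upSet_mono (hD : IsDownset' (Kc ℓ) D) {σ ψ : Set (Fin n → ℝ)}
    (hσ : IsConeFace σ (Kc ℓ)) (hψ : IsConeFace ψ (Kc ℓ)) (hsub : σ ⊆ ψ) :
    upSet' D σ ⊆ upSet' D ψ := by
  classical
  intro y hy
  rw [mem_upSet_char hψ]
  intro s hsψ hspos
  obtain ⟨δ, hδ, hδlt⟩ := exists_delta (Finset.univ.filter (· ∉ IFc ℓ ψ))
    (fun j => ℓ j s) (fun j => ℓ j (vpt ℓ σ)) (fun j hj => hspos j (by simpa using hj))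
  have h1 : y - δ • vpt ℓ σ ∈ D := by
    refine (mem_upSet_char hσ).1 hy _ (face_smul hσ (vpt_mem hσ) hδ.le) ?_
    intro i hi
    simp only [map_smul, smul_eq_mul]
    exact mul_pos hδ (ℓ_vpt_pos hσ hi)
  refine hD _ _ h1 ?_
  have heq : y - δ • vpt ℓ σ - (y - s) = s - δ • vpt ℓ σ := by ring
  rw [heq]
  intro i
  by_cases hi : i ∈ IFc ℓ ψ
  · have h2 : ℓ i s = 0 := hi s hsψ
    have h3 : ℓ i (vpt ℓ σ) = 0 := ℓ_vpt_zero hσ (IFc_antitone hsub hi)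
    simp [map_sub, map_smul, h2, h3]
  · have := hδlt i (by simpa using hi)
    simp only [map_sub, map_smul, smul_eq_mul]
    linarith

lemma exists_dominating_smul {P : Set (Fin m)} (hcan : IFc ℓ (FJ ℓ P) = P)
    {d : Fin n → ℝ} (hd : d ∈ FJ ℓ P) :
    ∃ t : ℝ, 0 ≤ t ∧ t • vpt ℓ (FJ ℓ P) - d ∈ Kc ℓ := by
  classical
  obtain ⟨δ, hδ, hδlt⟩ := exists_delta (Finset.univ.filter (· ∉ P))
    (fun j => ℓ j (vpt ℓ (FJ ℓ P))) (fun j => ℓ j d)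
    (fun j hj => ℓ_vpt_pos (isConeFace_FJ P) (by rw [hcan]; simpa using hj))
  refine ⟨δ⁻¹, by positivity, ?_⟩
  intro i
  simp only [map_sub, map_smul, smul_eq_mul]
  by_cases hi : i ∈ P
  · rw [hd.2 i hi, ℓ_vpt_zero (isConeFace_FJ P) (subset_IFc_FJ P hi)]
    simp
  · have h1 := hδlt i (by simpa using hi)
    have h2 : ℓ i d < ℓ i (vpt ℓ (FJ ℓ P)) / δ := (lt_div_iff₀ hδ).2 (by linarith)
    rw [div_eq_inv_mul] at h2
    linarith

lemma sup_push (hD : IsDownset' (Kc ℓ) D) {J₀ : Set (Fin m)} (hcan : IFc ℓ (FJ ℓ J₀) = J₀)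
    {a v : Fin n → ℝ} (hT0 : a ∈ upSet' D (FJ ℓ J₀)) (hvK : v ∈ Kc ℓ)
    (hv0 : ∀ j ∈ J₀, ℓ j v = 0)
    (hbdd : BddAbove {t : ℝ | 0 ≤ t ∧ a + t • v ∈ upSet' D (FJ ℓ J₀)}) :
    a + (sSup {t : ℝ | 0 ≤ t ∧ a + t • v ∈ upSet' D (FJ ℓ J₀)}) • v ∈ upSet' D (FJ ℓ J₀) := by
  classical
  set T := {t : ℝ | 0 ≤ t ∧ a + t • v ∈ upSet' D (FJ ℓ J₀)} with hT
  have hTne : T.Nonempty := ⟨0, le_refl 0, by simpa using hT0⟩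
  set ts := sSup T with hts
  rw [mem_upSet_char (isConeFace_FJ J₀)]
  intro s hs hspos
  rw [hcan] at hspos
  obtain ⟨δ, hδ, hδlt⟩ := exists_delta (Finset.univ.filter (· ∉ J₀))
    (fun j => ℓ j s / 2) (fun j => ℓ j v)
    (fun j hj => by
      have := hspos j (by simpa using hj); linarith)
  obtain ⟨t, htT, htgt⟩ := exists_lt_of_lt_csSup hTne (show ts - δ < sSup T by rw [← hts]; linarith)
  have hle : t ≤ ts := le_csSup hbdd htT
  have hd : a + t • v - (2⁻¹ : ℝ) • s ∈ D := by
    refine (mem_upSet_char (isConeFace_FJ J₀)).1 htT.2 _ (FJ_smul hs (by norm_num)) ?_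
    intro i hi
    rw [hcan] at hi
    simp only [map_smul, smul_eq_mul]
    have := hspos i hi
    nlinarith
  refine hD _ _ hd ?_
  intro i
  have heq : ℓ i (a + t • v - (2⁻¹ : ℝ) • s - (a + ts • v - s)) =
      (t - ts) * ℓ i v + 2⁻¹ * ℓ i s := by
    simp only [map_sub, map_add, map_smul, smul_eq_mul]
    ring
  rw [heq]
  by_cases hi : i ∈ J₀
  · rw [hv0 i hi, hs.2 i hi]; simp
  · have h1 := hδlt i (by simpa using hi)
    have h2 := hspos i hi
    have h3 := hvK i
    nlinarith

variable (ℓ) in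
def tauT (D : Set (Fin n → ℝ)) (J₀ : Set (Fin m)) (a : Fin n → ℝ) : Set (Fin n → ℝ) :=
  {c | c ∈ Kc ℓ ∧ a + c ∈ upSet' D (FJ ℓ J₀)}

variable (ℓ) in
def Zpat (D : Set (Fin n → ℝ)) (J₀ : Set (Fin m)) (a : Fin n → ℝ) : Set (Set (Fin m)) :=
  {P | ∃ c ∈ tauT ℓ D J₀ a, ZS ℓ c = P}

lemma tauT_shrink (hD : IsDownset' (Kc ℓ) D) {J₀ : Set (Fin m)} {a w : Fin n → ℝ}
    (hw : w ∈ Kc ℓ) : tauT ℓ D J₀ (a + w) ⊆ tauT ℓ D J₀ a := by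
  rintro c ⟨hcK, hcup⟩
  refine ⟨hcK, upSet_down hD hcup ?_⟩
  have : a + w + c - (a + c) = w := by ring
  rw [this]; exact hw

lemma zpat_shrink (hD : IsDownset' (Kc ℓ) D) {J₀ : Set (Fin m)} {a w : Fin n → ℝ}
    (hw : w ∈ Kc ℓ) : Zpat ℓ D J₀ (a + w) ⊆ Zpat ℓ D J₀ a := by
  rintro P ⟨c, hc, hZc⟩
  exact ⟨c, tauT_shrink hD hw hc, hZc⟩

lemma main_ind (hD : IsDownset' (Kc ℓ) D) {J₀ : Set (Fin m)}
    (hcan : IFc ℓ (FJ ℓ J₀) = J₀) (A : Set (Fin n → ℝ))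
    (hAup : ∀ a ∈ A, a ∈ upSet' D (FJ ℓ J₀))
    (hApush : ∀ a ∈ A, ∀ w ∈ Kc ℓ, a + w ∈ upSet' D (FJ ℓ J₀) → a + w ∈ A)
    (hA' : ∀ a ∈ A, ∀ c ∈ tauT ℓ D J₀ a, c ∈ FJ ℓ J₀) :
    ∀ k : ℕ, ∀ a ∈ A, (Zpat ℓ D J₀ a).ncard ≤ k →
      ∃ a' ∈ A, IsConeFace (tauT ℓ D J₀ a') (Kc ℓ) := by
  classical
  intro k
  induction k with
  | zero =>
      intro a ha hcard
      exfalso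
      have h0 : Set.univ ∈ Zpat ℓ D J₀ a := by
        refine ⟨0, ⟨Kc_zero, by simpa using hAup a ha⟩, ?_⟩
        ext i; simp [ZS]
      have := (Set.ncard_pos (Set.toFinite _)).2 ⟨_, h0⟩
      omega
  | succ k ih =>
      intro a ha hcard
      by_cases hface : IsConeFace (tauT ℓ D J₀ a) (Kc ℓ)
      · exact ⟨a, ha, hface⟩
      suffices h : ∃ a' ∈ A, Zpat ℓ D J₀ a' ⊂ Zpat ℓ D J₀ a by
        obtain ⟨a', ha', hsub⟩ := h
        refine ih a' ha' ?_
        have := Set.ncard_lt_ncard hsub (Set.toFinite _)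
        omega
      by_cases hb : ∃ P ∈ Zpat ℓ D J₀ a, ∃ t : ℝ, 0 ≤ t ∧
          a + t • vpt ℓ (FJ ℓ P) ∉ upSet' D (FJ ℓ J₀)
      · -- case (i) : bounded ray, saturate along it
        obtain ⟨P, hP, t₀, ht₀, ht₀n⟩ := hb
        obtain ⟨c₀, hc₀, hZc₀⟩ := hP
        have hcanP : IFc ℓ (FJ ℓ P) = P := hZc₀ ▸ IFc_FJ_ZS hc₀.1
        set v := vpt ℓ (FJ ℓ P) with hv
        have hvFJ : v ∈ FJ ℓ P := vpt_mem (isConeFace_FJ P)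
        have hvK : v ∈ Kc ℓ := hvFJ.1
        have hJ₀P : J₀ ⊆ P := by
          rw [← hZc₀]
          exact fun j hj => (hA' a ha c₀ hc₀).2 j hj
        have hv0 : ∀ j ∈ J₀, ℓ j v = 0 := fun j hj => hvFJ.2 j (hJ₀P hj)
        set T := {t : ℝ | 0 ≤ t ∧ a + t • v ∈ upSet' D (FJ ℓ J₀)} with hT
        have hbdd : BddAbove T := by
          refine ⟨t₀, fun t ht => ?_⟩
          by_contra hlt
          push_neg at hlt
          refine ht₀n (upSet_down hD ht.2 ?_)
          have : a + t • v - (a + t₀ • v) = (t - t₀) • v := by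
            rw [sub_smul]; ring
          rw [this]
          exact Kc_smul hvK (by linarith)
        set ts := sSup T with hts
        have hts0 : 0 ≤ ts := le_csSup hbdd ⟨le_refl 0, by simpa using hAup a ha⟩
        have hmem : a + ts • v ∈ upSet' D (FJ ℓ J₀) :=
          sup_push hD hcan (hAup a ha) hvK hv0 hbdd
        have ha' : a + ts • v ∈ A := hApush a ha _ (Kc_smul hvK hts0) hmem
        refine ⟨a + ts • v, ha', HasSubset.Subset.ssubset_of_ne
          (zpat_shrink hD (Kc_smul hvK hts0)) ?_⟩
        intro heq
        have hPin : P ∈ Zpat ℓ D J₀ (a + ts • v) := by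
          rw [heq]; exact ⟨c₀, hc₀, hZc₀⟩
        obtain ⟨c, hc, hZc⟩ := hPin
        obtain ⟨ε, hε, hεlt⟩ := exists_delta (Finset.univ.filter (· ∉ P))
          (fun j => ℓ j c) (fun j => ℓ j v)
          (fun j hj => by
            have h1 : j ∉ ZS ℓ c := by rw [hZc]; simpa using hj
            have h2 : ℓ j c ≠ 0 := h1
            have h3 := hc.1 j
            exact lt_of_le_of_ne h3 (Ne.symm h2))
        have hstep : a + (ts + ε) • v ∈ upSet' D (FJ ℓ J₀) := by
          refine upSet_down hD hc.2 ?_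
          intro i
          have heq2 : ℓ i (a + ts • v + c - (a + (ts + ε) • v)) = ℓ i c - ε * ℓ i v := by
            simp only [map_sub, map_add, map_smul, smul_eq_mul]; ring
          rw [heq2]
          by_cases hi : i ∈ P
          · have h1 : ℓ i c = 0 := by
              have : i ∈ ZS ℓ c := by rw [hZc]; exact hi
              exact this
            rw [h1, hvFJ.2 i hi]; simp
          · have := hεlt i (by simpa using hi)
            linarith
        have : ts + ε ≤ ts := le_csSup hbdd ⟨by linarith, hstep⟩
        linarith
      · -- case (ii) : all rays unbounded
        push_neg at hb
        have hunb : ∀ P ∈ Zpat ℓ D J₀ a, ∀ d ∈ FJ ℓ P, a + d ∈ upSet' D (FJ ℓ J₀) := by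
          intro P hP d hd
          obtain ⟨c₀, hc₀, hZc₀⟩ := hP
          have hcanP : IFc ℓ (FJ ℓ P) = P := hZc₀ ▸ IFc_FJ_ZS hc₀.1
          obtain ⟨t, ht, hdom⟩ := exists_dominating_smul hcanP hd
          refine upSet_down hD (hb P ⟨c₀, hc₀, hZc₀⟩ t ht) ?_
          have : a + t • vpt ℓ (FJ ℓ P) - (a + d) = t • vpt ℓ (FJ ℓ P) - d := by ring
          rw [this]; exact hdom
        -- extract a violating pair
        have hpair : ∃ c ∈ tauT ℓ D J₀ a, ∃ c' ∈ tauT ℓ D J₀ a,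
            c + c' ∉ tauT ℓ D J₀ a := by
          by_contra hadd
          push_neg at hadd
          refine hface ⟨fun c hc => hc.1, ⟨Kc_zero, by simpa using hAup a ha⟩, ?_, ?_⟩
          · exact fun c hc c' hc' => hadd c hc c' hc'
          · rintro y hy z hz ⟨hK, hup⟩
            constructor
            · refine ⟨hy, upSet_down hD hup ?_⟩
              have : a + (y + z) - (a + y) = z := by ring
              rw [this]; exact hz
            · refine ⟨hz, upSet_down hD hup ?_⟩
              have : a + (y + z) - (a + z) = y := by ring
              rw [this]; exact hy
        obtain ⟨c, hc, c', hc', hcc'⟩ := hpair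
        have hkey : ∀ P ∈ Zpat ℓ D J₀ a, ¬ (P ⊆ ZS ℓ c ∩ ZS ℓ c') := by
          intro P hP hPsub
          apply hcc'
          have hccK : c + c' ∈ Kc ℓ := Kc_add hc.1 hc'.1
          refine ⟨hccK, ?_⟩
          have hmemFJ : c + c' ∈ FJ ℓ P := by
            refine ⟨fun i => hccK i, fun i hi => ?_⟩
            have h1 : i ∈ ZS ℓ c ∩ ZS ℓ c' := hPsub hi
            have h2 : ℓ i c = 0 := h1.1
            have h3 : ℓ i c' = 0 := h1.2
            simp [map_add, h2, h3]
          exact hunb P hP _ hmemFJ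
        have ha' : a + c ∈ A := hApush a ha c hc.1 hc.2
        refine ⟨a + c, ha', HasSubset.Subset.ssubset_of_ne (zpat_shrink hD hc.1) ?_⟩
        intro heq
        have hP₂ : ZS ℓ c' ∈ Zpat ℓ D J₀ (a + c) := by
          rw [heq]; exact ⟨c', hc', rfl⟩
        obtain ⟨d, hd, hZd⟩ := hP₂
        have hcd : c + d ∈ tauT ℓ D J₀ a := by
          refine ⟨Kc_add hc.1 hd.1, ?_⟩
          have : a + (c + d) = a + c + d := by ring
          rw [this]; exact hd.2
        have : ZS ℓ (c + d) ∈ Zpat ℓ D J₀ a := ⟨c + d, hcd, rfl⟩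
        refine hkey _ this ?_
        rw [ZS_add hc.1 hd.1, hZd]

theorem cogen_cover (hpt : ∀ y : Fin n → ℝ, (∀ i, ℓ i y = 0) → y = 0)
    (hD : IsDownset' (Kc ℓ) D) (x : Fin n → ℝ) (hx : x ∈ D) :
    ∃ τ σ a, IsConeFace τ (Kc ℓ) ∧ IsConeFace σ (Kc ℓ) ∧ τ ⊆ σ ∧
      ((({a} + Kc ℓ) ∩ upSet' D σ = {a} + τ) ∧
        ∀ σ'' : Set (Fin n → ℝ), IsConeFace σ'' (Kc ℓ) → τ ⊆ σ'' → σ'' ⊂ σ →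
          ¬ (∀ s ∈ intrinsicInterior ℝ σ'', a - s ∈ D)) ∧
      x ∈ ({a} + τ - intrinsicInterior ℝ σ - Kc ℓ) := by
  classical
  set Sp : Set (Fin m) → (Fin n → ℝ) → Prop :=
    fun J y => (∀ i, 0 ≤ ℓ i y) ∧ ∀ i ∉ J, 0 < ℓ i y with hSp
  set 𝕁 : Set (Set (Fin m)) :=
    {J | IFc ℓ (FJ ℓ J) = J ∧ ∃ a, a ∈ upSet' D (FJ ℓ J) ∧ Sp J (a - x)} with h𝕁
  have huniv : (Set.univ : Set (Fin m)) ∈ 𝕁 := by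
    refine ⟨Set.Subset.antisymm (Set.subset_univ _)
      (fun i _ y hy => hy.2 i (Set.mem_univ i)), x, ?_, ?_⟩
    · intro s hs
      have hsFJ : s ∈ FJ ℓ Set.univ := intrinsicInterior_subset hs
      have : s = 0 := hpt s (fun i => hsFJ.2 i (Set.mem_univ i))
      rw [this, sub_zero]
      exact hx
    · exact ⟨fun i => by simp, fun i hi => absurd (Set.mem_univ i) hi⟩
  have hne : {k | ∃ J ∈ 𝕁, J.ncard = k}.Nonempty := ⟨_, Set.univ, huniv, rfl⟩
  obtain ⟨J₀, hJ₀𝕁, hJ₀card⟩ := Nat.sInf_mem hne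
  have hmin : ∀ J ∈ 𝕁, J₀.ncard ≤ J.ncard := fun J hJ => by
    rw [hJ₀card]; exact Nat.sInf_le ⟨J, hJ, rfl⟩
  obtain ⟨hcan, a₀, ha₀up, ha₀sp⟩ := hJ₀𝕁
  set A : Set (Fin n → ℝ) := {a | a ∈ upSet' D (FJ ℓ J₀) ∧ Sp J₀ (a - x)} with hA
  have hAup : ∀ a ∈ A, a ∈ upSet' D (FJ ℓ J₀) := fun a ha => ha.1
  have hApush : ∀ a ∈ A, ∀ w ∈ Kc ℓ, a + w ∈ upSet' D (FJ ℓ J₀) → a + w ∈ A := by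
    rintro a ⟨haup, hasp⟩ w hwK hup
    refine ⟨hup, fun i => ?_, fun i hi => ?_⟩
    · have h1 := hasp.1 i
      have h2 := hwK i
      have : ℓ i (a + w - x) = ℓ i (a - x) + ℓ i w := by
        simp only [map_sub, map_add]; ring
      rw [this]; linarith
    · have h1 := hasp.2 i hi
      have h2 := hwK i
      have : ℓ i (a + w - x) = ℓ i (a - x) + ℓ i w := by
        simp only [map_sub, map_add]; ring
      rw [this]; linarith
  have hFactA : ∀ a ∈ A, ∀ c ∈ tauT ℓ D J₀ a, c ∈ FJ ℓ J₀ := by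
    rintro a ⟨haup, hasp⟩ c ⟨hcK, hcup⟩
    have hvK : vpt ℓ (FJ ℓ J₀) ∈ Kc ℓ := (vpt_mem (isConeFace_FJ J₀)).1
    have hwK : vpt ℓ (FJ ℓ J₀) + c ∈ Kc ℓ := Kc_add hvK hcK
    have hZv : ZS ℓ (vpt ℓ (FJ ℓ J₀)) = J₀ := by
      ext i
      constructor
      · intro h
        by_contra hi
        have := ℓ_vpt_pos (isConeFace_FJ J₀) (by rw [hcan]; exact hi)
        have h' : ℓ i (vpt ℓ (FJ ℓ J₀)) = 0 := h
        linarith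
      · intro hi
        exact ℓ_vpt_zero (isConeFace_FJ J₀) (by rw [hcan]; exact hi)
    have hZw : ZS ℓ (vpt ℓ (FJ ℓ J₀) + c) = J₀ ∩ ZS ℓ c := by
      rw [ZS_add hvK hcK, hZv]
    have hcan' : IFc ℓ (FJ ℓ (J₀ ∩ ZS ℓ c)) = J₀ ∩ ZS ℓ c := by
      rw [← hZw]; exact IFc_FJ_ZS hwK
    have hJ' : (J₀ ∩ ZS ℓ c) ∈ 𝕁 := by
      refine ⟨hcan', a + c, ?_, ?_, ?_⟩
      · exact upSet_mono hD (isConeFace_FJ J₀) (isConeFace_FJ _)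
          (FJ_antitone Set.inter_subset_left) hcup
      · intro i
        have h1 := hasp.1 i
        have h2 := hcK i
        have : ℓ i (a + c - x) = ℓ i (a - x) + ℓ i c := by
          simp only [map_sub, map_add]; ring
        rw [this]; linarith
      · intro i hi
        have heq : ℓ i (a + c - x) = ℓ i (a - x) + ℓ i c := by
          simp only [map_sub, map_add]; ring
        rw [heq]
        by_cases hiJ : i ∈ J₀
        · have hiZ : i ∉ ZS ℓ c := fun h => hi ⟨hiJ, h⟩
          have h2 : ℓ i c ≠ 0 := hiZ
          have h3 := hcK i
          have h4 := hasp.1 i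
          have : 0 < ℓ i c := lt_of_le_of_ne h3 (Ne.symm h2)
          linarith
        · have h1 := hasp.2 i hiJ
          have h2 := hcK i
          linarith
    have hcard := hmin _ hJ'
    have heq : J₀ ∩ ZS ℓ c = J₀ :=
      Set.eq_of_subset_of_ncard_le Set.inter_subset_left hcard (Set.toFinite _)
    refine ⟨fun i => hcK i, fun i hi => ?_⟩
    have h5 : i ∈ J₀ ∩ ZS ℓ c := by rw [heq]; exact hi
    exact h5.2
  obtain ⟨af, hafA, hface⟩ := main_ind hD hcan A hAup hApush hFactA
    ((Zpat ℓ D J₀ a₀).ncard) a₀ (by exact ⟨ha₀up, ha₀sp⟩) le_rfl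
  set τ := tauT ℓ D J₀ af with hτdef
  have hτsub : τ ⊆ FJ ℓ J₀ := fun c hc => hFactA af hafA c hc
  set 𝕊 : Set (Set (Fin m)) := {J | IFc ℓ (FJ ℓ J) = J ∧ τ ⊆ FJ ℓ J ∧
    FJ ℓ J ⊆ FJ ℓ J₀ ∧ ∀ c ∈ τ, af + c ∈ upSet' D (FJ ℓ J)} with h𝕊
  have hJ₀𝕊 : J₀ ∈ 𝕊 := by exact ⟨hcan, hτsub, subset_rfl, fun c hc => hc.2⟩
  have hbddS : BddAbove {k | ∃ J ∈ 𝕊, J.ncard = k} := by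
    refine ⟨m, ?_⟩
    rintro k ⟨J, _, rfl⟩
    calc J.ncard ≤ (Set.univ : Set (Fin m)).ncard :=
          Set.ncard_le_ncard (Set.subset_univ _) (Set.toFinite _)
      _ = m := by rw [Set.ncard_univ]; simp
  obtain ⟨Js, hJs𝕊, hJscard⟩ := Nat.sSup_mem (Set.nonempty_of_mem (show J₀.ncard ∈ {k | ∃ J ∈ 𝕊, J.ncard = k} from ⟨J₀, hJ₀𝕊, rfl⟩)) hbddS
  have hmax : ∀ J ∈ 𝕊, J.ncard ≤ Js.ncard := fun J hJ => by
    rw [hJscard]; exact le_csSup hbddS ⟨J, hJ, rfl⟩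
  obtain ⟨hcans, hτJs, hJssub, hupJs⟩ := hJs𝕊
  set cert : Set (Fin m) → (Fin n → ℝ) := fun J =>
    if h : ∃ c, c ∈ τ ∧ af + c ∉ upSet' D (FJ ℓ J) then h.choose else 0 with hcert
  have hcertτ : ∀ J, cert J ∈ τ := by
    intro J
    rw [hcert]
    by_cases h : ∃ c, c ∈ τ ∧ af + c ∉ upSet' D (FJ ℓ J)
    · simpa [h] using h.choose_spec.1
    · simpa [h] using hface.2.1
  set cs : Fin n → ℝ := ∑ J : Set (Fin m), cert J with hcs
  have hcsτ : cs ∈ τ :=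
    Finset.sum_induction _ (· ∈ τ) (fun a b ha hb => hface.2.2.1 a ha b hb)
      hface.2.1 (fun J _ => hcertτ J)
  set ast := af + cs with hast
  have hastA : ast ∈ A := hApush af hafA cs (hface.1 hcsτ) hcsτ.2
  have hE1 : tauT ℓ D J₀ ast = τ := by
    apply Set.Subset.antisymm
    · rintro c ⟨hcK, hcup⟩
      have hsum : cs + c ∈ tauT ℓ D J₀ af := by
        refine ⟨Kc_add (hface.1 hcsτ) hcK, ?_⟩
        have : af + (cs + c) = ast + c := by rw [hast]; ring
        rw [this]; exact hcup
      exact (hface.2.2.2 cs (hface.1 hcsτ) c hcK hsum).2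
    · intro c hc
      have hcsc : cs + c ∈ τ := hface.2.2.1 cs hcsτ c hc
      refine ⟨hface.1 hc, ?_⟩
      have : ast + c = af + (cs + c) := by rw [hast]; ring
      rw [this]
      exact hcsc.2
  have hupmono : upSet' D (FJ ℓ Js) ⊆ upSet' D (FJ ℓ J₀) :=
    upSet_mono hD (isConeFace_FJ Js) (isConeFace_FJ J₀) hJssub
  have hE3 : ({ast} + Kc ℓ) ∩ upSet' D (FJ ℓ Js) = {ast} + τ := by
    ext y
    constructor
    · rintro ⟨hy1, hy2⟩
      obtain ⟨u, hu, c, hcK, rfl⟩ := Set.mem_add.1 hy1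
      rw [Set.mem_singleton_iff] at hu
      subst hu
      have hcτ : c ∈ tauT ℓ D J₀ ast := ⟨hcK, upSet_down hD (hupmono hy2) (by
        have : ast + c - (ast + c) = 0 := by ring
        rw [this]; exact Kc_zero)⟩
      exact Set.mem_add.2 ⟨ast, Set.mem_singleton _, c, hE1 ▸ hcτ, rfl⟩
    · intro hy
      obtain ⟨u, hu, t, htτ, rfl⟩ := Set.mem_add.1 hy
      rw [Set.mem_singleton_iff] at hu
      subst hu
      refine ⟨Set.mem_add.2 ⟨ast, Set.mem_singleton _, t, hface.1 htτ, rfl⟩, ?_⟩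
      have hcst : cs + t ∈ τ := hface.2.2.1 cs hcsτ t htτ
      have : ast + t = af + (cs + t) := by rw [hast]; ring
      rw [this]
      exact hupJs _ hcst
  have hE4 : ∀ σ'' : Set (Fin n → ℝ), IsConeFace σ'' (Kc ℓ) → τ ⊆ σ'' →
      σ'' ⊂ FJ ℓ Js → ast ∉ upSet' D σ'' := by
    intro σ'' hσ'' hτσ'' hss
    have hσeq : σ'' = FJ ℓ (IFc ℓ σ'') := face_eq_FJ hσ''
    set J'' := IFc ℓ σ'' with hJ''
    have hJex : ∃ c, c ∈ τ ∧ af + c ∉ upSet' D (FJ ℓ J'') := by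
      by_contra h
      push_neg at h
      have hJ''can : IFc ℓ (FJ ℓ J'') = J'' := by
        conv_rhs => rw [hJ'', hσeq]
      have hJ''𝕊 : J'' ∈ 𝕊 := by
        refine ⟨hJ''can, ?_, ?_, fun c hc => h c hc⟩
        · rw [← hσeq]; exact hτσ''
        · rw [← hσeq]; exact hss.subset.trans hJssub
      have hJsub : Js ⊆ J'' := by
        have h1 : IFc ℓ (FJ ℓ Js) ⊆ IFc ℓ σ'' := IFc_antitone hss.subset
        rw [hcans] at h1
        exact h1
      have hne : Js ≠ J'' := by
        intro hJeq
        have : σ'' = FJ ℓ Js := by rw [hσeq, ← hJeq]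
        exact hss.ne this
      have hcard : J''.ncard ≤ Js.ncard := hmax _ hJ''𝕊
      exact hne (Set.eq_of_subset_of_ncard_le hJsub hcard (Set.toFinite _))
    have hcertval : cert J'' ∈ τ ∧ af + cert J'' ∉ upSet' D (FJ ℓ J'') := by
      have : cert J'' = hJex.choose := by rw [hcert]; simp [dif_pos hJex]
      rw [this]
      exact hJex.choose_spec
    intro hup
    apply hcertval.2
    refine upSet_down hD (show ast ∈ upSet' D (FJ ℓ J'') from hσeq ▸ hup) ?_
    have hsum : cs = cert J'' + ∑ J ∈ Finset.univ.erase J'', cert J := by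
      rw [hcs, ← Finset.add_sum_erase _ _ (Finset.mem_univ J'')]
    have heq2 : ast - (af + cert J'') = ∑ J ∈ Finset.univ.erase J'', cert J := by
      rw [hast, hsum]; ring
    rw [heq2]
    exact Finset.sum_induction _ (· ∈ Kc ℓ) (fun a b ha hb => Kc_add ha hb)
      Kc_zero (fun J _ => hface.1 (hcertτ J))
  -- final membership
  have hJ₀Js : J₀ ⊆ Js := by
    have h1 : IFc ℓ (FJ ℓ J₀) ⊆ IFc ℓ (FJ ℓ Js) := IFc_antitone hJssub
    rw [hcan, hcans] at h1
    exact h1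
  have hvτK : vpt ℓ τ ∈ Kc ℓ := hface.1 (vpt_mem hface)
  set y := ast + vpt ℓ τ - x with hy
  have hyK : ∀ i, 0 ≤ ℓ i y := by
    intro i
    have h1 := hastA.2.1 i
    have h2 := hvτK i
    have : ℓ i y = ℓ i (ast - x) + ℓ i (vpt ℓ τ) := by
      rw [hy]; simp only [map_sub, map_add]; ring
    rw [this]; linarith
  have hypos : ∀ i ∉ Js, 0 < ℓ i y := by
    intro i hi
    have heq : ℓ i y = ℓ i (ast - x) + ℓ i (vpt ℓ τ) := by
      rw [hy]; simp only [map_sub, map_add]; ring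
    rw [heq]
    by_cases hiτ : i ∈ IFc ℓ τ
    · have hiJ₀ : i ∉ J₀ := fun h => hi (hJ₀Js h)
      have h1 := hastA.2.2 i hiJ₀
      have h2 := hvτK i
      linarith
    · have h1 := ℓ_vpt_pos hface hiτ
      have h2 := hastA.2.1 i
      linarith
  obtain ⟨ε, hε, hεlt⟩ := exists_delta (Finset.univ.filter (· ∉ Js))
    (fun i => ℓ i y) (fun i => ℓ i (vpt ℓ (FJ ℓ Js)))
    (fun i hi => hypos i (by simpa using hi))
  have hsint : ε • vpt ℓ (FJ ℓ Js) ∈ intrinsicInterior ℝ (FJ ℓ Js) := by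
    rw [intrinsic_face_char (isConeFace_FJ Js)]
    refine ⟨FJ_smul (vpt_mem (isConeFace_FJ Js)) hε.le, fun i hi => ?_⟩
    simp only [map_smul, smul_eq_mul]
    exact mul_pos hε (ℓ_vpt_pos (isConeFace_FJ Js) hi)
  have hcrem : y - ε • vpt ℓ (FJ ℓ Js) ∈ Kc ℓ := by
    intro i
    simp only [map_sub, map_smul, smul_eq_mul]
    by_cases hi : i ∈ Js
    · rw [(vpt_mem (isConeFace_FJ Js)).2 i hi]
      have := hyK i
      linarith
    · have := hεlt i (by simpa using hi)
      linarith
  refine ⟨τ, FJ ℓ Js, ast, hface, isConeFace_FJ Js, hτJs, ⟨hE3, ?_⟩, ?_⟩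
  · intro σ'' h1 h2 h3 h4
    exact hE4 σ'' h1 h2 h3 h4
  · refine Set.mem_sub.2 ⟨ast + vpt ℓ τ - ε • vpt ℓ (FJ ℓ Js), ?_,
      y - ε • vpt ℓ (FJ ℓ Js), hcrem, ?_⟩
    · refine Set.mem_sub.2 ⟨ast + vpt ℓ τ, ?_, ε • vpt ℓ (FJ ℓ Js), hsint, rfl⟩
      exact Set.mem_add.2 ⟨ast, Set.mem_singleton _, vpt ℓ τ, vpt_mem hface, rfl⟩
    · rw [hy]; ring

end PolyAux

/-- Every downset is the union of the coprincipal downsets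
`a + τ - σ° - C` over all of its cogenerators. -/
theorem downset_eq_union_coprincipal {n : ℕ} (C D : Set (Fin n → ℝ))
    (hC : IsPolyCone C) (hpointed : C ∩ (-C) = {0}) (hspan : C - C = Set.univ)
    (hD : IsDownset C D) :
    D = ⋃ (τ : Set (Fin n → ℝ)) (σ : Set (Fin n → ℝ)) (a : Fin n → ℝ)
          (_ : IsConeFace τ C ∧ IsConeFace σ C ∧ τ ⊆ σ ∧ IsCogen C D τ σ a),
          ({a} + τ - intrinsicInterior ℝ σ - C) := by
  classical
  obtain ⟨m, ℓ, rfl⟩ := hC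
  have hpt : ∀ y : Fin n → ℝ, (∀ i, ℓ i y = 0) → y = 0 := by
    intro y hy
    have h1 : y ∈ {x | ∀ i, 0 ≤ ℓ i x} := fun i => le_of_eq (hy i).symm
    have h2 : y ∈ -{x | ∀ i, 0 ≤ ℓ i x} := by
      rw [Set.mem_neg]
      intro i
      show 0 ≤ ℓ i (-y)
      rw [map_neg, hy i, neg_zero]
    have h3 : y ∈ ({x | ∀ i, 0 ≤ ℓ i x} ∩ (-{x | ∀ i, 0 ≤ ℓ i x})) := ⟨h1, h2⟩
    rw [hpointed] at h3
    exact h3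
  have hD' : PolyAux.IsDownset' (PolyAux.Kc ℓ) D := hD
  ext z
  simp only [Set.mem_iUnion]
  constructor
  · intro hz
    obtain ⟨τ, σ, a, hfτ, hfσ, hτσ, ⟨heq, hmin⟩, hmem⟩ :=
      PolyAux.cogen_cover hpt hD' z hz
    exact ⟨τ, σ, a, ⟨hfτ, hfσ, hτσ, heq, hmin⟩, hmem⟩
  · rintro ⟨τ, σ, a, ⟨hfτ, hfσ, hτσ, hcog⟩, hmem⟩
    obtain ⟨u', hu', c, hc, rfl⟩ := Set.mem_sub.1 hmem
    obtain ⟨u, hu, s, hs, rfl⟩ := Set.mem_sub.1 hu'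
    obtain ⟨a', ha', t, ht, rfl⟩ := Set.mem_add.1 hu
    rw [Set.mem_singleton_iff] at ha'
    subst ha'
    have h1 : a' + t ∈ ({a'} + {x | ∀ i, 0 ≤ ℓ i x}) ∩ upSet D σ := by
      rw [hcog.1]
      exact Set.mem_add.2 ⟨a', Set.mem_singleton _, t, ht, rfl⟩
    have h2 : a' + t - s ∈ D := h1.2 s hs
    refine hD _ _ h2 ?_
    have heq2 : a' + t - s - (a' + t - s - c) = c := by ring
    rw [heq2]
    exact hc
end

section
/- Let C be a pointed, spanning polyhedral cone in E = ℝⁿ and let τ ⊆ σ be faces of C. For any a, a' ∈ E with a − a' ∈ span_ℝ τ, the coprincipal downsets agree: a + τ − σ° − C = a' + τ − σ° − C. Consequently the set a + τ − σ° − C depends only on the coset a + span_ℝ τ. -/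
open Pointwise

-- auxiliary: face of a polyhedral cone is closed under nonneg scaling
lemma face_smul {n : ℕ} {C τ : Set (Fin n → ℝ)} (hC : IsPolyCone C)
    (hτ : IsConeFace τ C) {c : ℝ} (hc : 0 ≤ c) {t : Fin n → ℝ} (ht : t ∈ τ) :
    c • t ∈ τ := by
  obtain ⟨m, ℓ, rfl⟩ := hC
  obtain ⟨hsub, h0, hadd, hface⟩ := hτ
  have htC := hsub ht
  have hsmulC : ∀ d : ℝ, 0 ≤ d → d • t ∈ {x | ∀ i, 0 ≤ ℓ i x} := by
    intro d hd i
    simp only [Set.mem_setOf_eq, map_smul, smul_eq_mul]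
    exact mul_nonneg hd (htC i)
  have hnat : ∀ k : ℕ, (k : ℝ) • t ∈ τ := by
    intro k
    induction k with
    | zero => simpa using h0
    | succ k ih =>
      have := hadd _ ih _ ht
      simpa [add_smul] using this
  set k := ⌈c⌉₊ with hk
  have hck : c ≤ (k : ℝ) := Nat.le_ceil c
  have h1 : c • t ∈ {x | ∀ i, 0 ≤ ℓ i x} := hsmulC c hc
  have h2 : ((k : ℝ) - c) • t ∈ {x | ∀ i, 0 ≤ ℓ i x} := hsmulC _ (by linarith)
  have hsum : c • t + ((k : ℝ) - c) • t ∈ τ := by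
    rw [← add_smul]
    simpa using hnat k
  exact (hface _ h1 _ h2 hsum).1

lemma span_eq_sub {n : ℕ} {C τ : Set (Fin n → ℝ)} (hC : IsPolyCone C)
    (hτ : IsConeFace τ C) {v : Fin n → ℝ} (hv : v ∈ Submodule.span ℝ τ) :
    ∃ t₁ ∈ τ, ∃ t₂ ∈ τ, v = t₁ - t₂ := by
  induction hv using Submodule.span_induction with
  | mem x hx => exact ⟨x, hx, 0, hτ.2.1, by simp⟩
  | zero => exact ⟨0, hτ.2.1, 0, hτ.2.1, by simp⟩
  | add x y _ _ ihx ihy =>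
    obtain ⟨t₁, h1, t₂, h2, rfl⟩ := ihx
    obtain ⟨t₃, h3, t₄, h4, rfl⟩ := ihy
    exact ⟨t₁ + t₃, hτ.2.2.1 _ h1 _ h3, t₂ + t₄, hτ.2.2.1 _ h2 _ h4, by abel⟩
  | smul c x _ ihx =>
    obtain ⟨t₁, h1, t₂, h2, rfl⟩ := ihx
    rcases le_or_gt 0 c with hc | hc
    · exact ⟨c • t₁, face_smul hC hτ hc h1, c • t₂, face_smul hC hτ hc h2, by
        simp [smul_sub]⟩
    · exact ⟨(-c) • t₂, face_smul hC hτ (by linarith) h2,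
        (-c) • t₁, face_smul hC hτ (by linarith) h1, by
        simp [smul_sub]; module⟩

/-- The coprincipal downset `a + τ - σ° - C` depends only on the coset
`a + span τ`. -/
theorem coprincipal_well_defined {n : ℕ} (C τ σ : Set (Fin n → ℝ))
    (hC : IsPolyCone C) (hpointed : C ∩ (-C) = {0}) (hspan : C - C = Set.univ)
    (hτ : IsConeFace τ C) (hσ : IsConeFace σ C) (hts : τ ⊆ σ)
    (a a' : Fin n → ℝ) (h : a - a' ∈ Submodule.span ℝ τ) :
    {a} + τ - intrinsicInterior ℝ σ - C = {a'} + τ - intrinsicInterior ℝ σ - C := by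
  obtain ⟨t₁, h1, t₂, h2, hv⟩ := span_eq_sub hC hτ h
  have key : ∀ (b b' : Fin n → ℝ) (u₁ u₂ : Fin n → ℝ), u₁ ∈ τ → u₂ ∈ τ →
      b - b' = u₁ - u₂ →
      {b} + τ - intrinsicInterior ℝ σ - C ⊆ {b'} + τ - intrinsicInterior ℝ σ - C := by
    rintro b b' u₁ u₂ hu₁ hu₂ hbb x hx
    obtain ⟨y, hy, c, hc, rfl⟩ := hx
    obtain ⟨z, hz, s, hs, rfl⟩ := hy
    obtain ⟨w, hw, t, ht, rfl⟩ := hz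
    simp only [Set.mem_singleton_iff] at hw
    subst hw
    refine ⟨b' + (u₁ + t) - s, ⟨b' + (u₁ + t), ⟨b', rfl, u₁ + t, hτ.2.2.1 _ hu₁ _ ht, rfl⟩,
      s, hs, rfl⟩, c + u₂, ?_, ?_⟩
    · -- c + u₂ ∈ C
      obtain ⟨m, ℓ, rfl⟩ := hC
      intro i
      have := hc i
      have := hτ.1 hu₂ i
      simp only [map_add]
      linarith
    · have hw2 : w = b' + (u₁ - u₂) := by rw [← hbb]; abel
      rw [hw2]; ext i; simp only [Pi.add_apply, Pi.sub_apply]; ring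
  apply Set.Subset.antisymm
  · exact key a a' t₁ t₂ h1 h2 hv
  · exact key a' a t₂ t₁ h2 h1 (by rw [← neg_sub, hv]; abel)
end

section
/- Let C be a pointed, spanning polyhedral cone in E = ℝⁿ and let τ ⊆ σ be faces of C; let π : E → E/span_ℝ τ be the quotient map. Then: (i) every point w̄ of E/span_ℝ τ belongs to each of its σ-vicinities; and (ii) if V₁, …, V_m (m ≥ 1) are sets, each of which is a σ-vicinity of some point of E/span_ℝ τ, and w̄ ∈ V₁ ∩ ⋯ ∩ V_m, then V₁ ∩ ⋯ ∩ V_m contains a σ-vicinity of w̄. In particular, the collection of all σ-vicinities of all points forms a base for a topology on E/span_ℝ τ. -/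
open Pointwise

private lemma aff_eq_span {n : ℕ} {σ : Set (Fin n → ℝ)} (h0 : (0 : Fin n → ℝ) ∈ σ) :
    (affineSpan ℝ σ : Set (Fin n → ℝ)) = (Submodule.span ℝ σ : Set (Fin n → ℝ)) := by
  rw [← affineSpan_insert_zero, Set.insert_eq_of_mem h0]

private lemma mem_II {n : ℕ} {σ : Set (Fin n → ℝ)} (h0 : (0 : Fin n → ℝ) ∈ σ)
    {x : Fin n → ℝ} :
    x ∈ intrinsicInterior ℝ σ ↔ x ∈ Submodule.span ℝ σ ∧
      ∃ ε > 0, ∀ y, y ∈ Submodule.span ℝ σ → dist y x < ε → y ∈ σ := by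
  constructor
  · rintro ⟨x', hx', rfl⟩
    have hxspan : (x' : Fin n → ℝ) ∈ Submodule.span ℝ σ := by
      have := x'.2
      rw [← SetLike.mem_coe, ← aff_eq_span h0]
      exact this
    refine ⟨hxspan, ?_⟩
    rw [mem_interior_iff_mem_nhds, Metric.mem_nhds_iff] at hx'
    obtain ⟨ε, hε, hball⟩ := hx'
    refine ⟨ε, hε, fun y hy hdy => ?_⟩
    have hy' : y ∈ affineSpan ℝ σ := by
      rw [← SetLike.mem_coe, aff_eq_span h0]; exact hy
    have : (⟨y, hy'⟩ : affineSpan ℝ σ) ∈ Metric.ball x' ε := by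
      simpa [Metric.mem_ball, Subtype.dist_eq] using hdy
    exact hball this
  · rintro ⟨hxspan, ε, hε, h⟩
    have hx' : x ∈ affineSpan ℝ σ := by
      rw [← SetLike.mem_coe, aff_eq_span h0]; exact hxspan
    refine ⟨⟨x, hx'⟩, ?_, rfl⟩
    rw [mem_interior_iff_mem_nhds, Metric.mem_nhds_iff]
    refine ⟨ε, hε, fun y hy => ?_⟩
    refine h y ?_ (by simpa [Metric.mem_ball, Subtype.dist_eq] using hy)
    rw [← SetLike.mem_coe, ← aff_eq_span h0]
    exact y.2

private lemma cone_props {n : ℕ} {C : Set (Fin n → ℝ)} (hC : IsPolyCone C) :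
    (0 : Fin n → ℝ) ∈ C ∧ (∀ x ∈ C, ∀ y ∈ C, x + y ∈ C) ∧
      ∀ (c : ℝ), 0 ≤ c → ∀ x ∈ C, c • x ∈ C := by
  obtain ⟨m, ℓ, rfl⟩ := hC
  refine ⟨fun i => by simp, fun x hx y hy i => by simpa using add_nonneg (hx i) (hy i),
    fun c hc x hx i => by simpa using mul_nonneg hc (hx i)⟩

private lemma face_smul_s12 {n : ℕ} {C σ : Set (Fin n → ℝ)} (hC : IsPolyCone C)
    (hσ : IsConeFace σ C) {c : ℝ} (hc0 : 0 ≤ c) (hc1 : c ≤ 1) {x : Fin n → ℝ}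
    (hx : x ∈ σ) : c • x ∈ σ := by
  obtain ⟨h0C, haddC, hsmulC⟩ := cone_props hC
  have hxC := hσ.1 hx
  have h1 : c • x ∈ C := hsmulC c hc0 x hxC
  have h2 : (1 - c) • x ∈ C := hsmulC _ (by linarith) x hxC
  have hsum : c • x + (1 - c) • x ∈ σ := by
    rw [← add_smul]
    simpa using hx
  exact (hσ.2.2.2 _ h1 _ h2 hsum).1

private lemma II_add {n : ℕ} {σ : Set (Fin n → ℝ)} (h0 : (0 : Fin n → ℝ) ∈ σ)
    (hadd : ∀ x ∈ σ, ∀ y ∈ σ, x + y ∈ σ) {s x : Fin n → ℝ}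
    (hs : s ∈ intrinsicInterior ℝ σ) (hx : x ∈ σ) : s + x ∈ intrinsicInterior ℝ σ := by
  rw [mem_II h0] at hs ⊢
  obtain ⟨hspan, ε, hε, hball⟩ := hs
  have hxspan : x ∈ Submodule.span ℝ σ := Submodule.subset_span hx
  refine ⟨Submodule.add_mem _ hspan hxspan, ε, hε, fun y hy hdy => ?_⟩
  have h1 : y - x ∈ σ := by
    refine hball _ (Submodule.sub_mem _ hy hxspan) ?_
    rw [dist_eq_norm] at hdy ⊢
    rw [show y - x - s = y - (s + x) from by abel]
    exact hdy
  have h2 := hadd _ h1 _ hx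
  simpa using h2

private lemma II_smul {n : ℕ} {C σ : Set (Fin n → ℝ)} (hC : IsPolyCone C)
    (hσ : IsConeFace σ C) {s : Fin n → ℝ}
    (hs : s ∈ intrinsicInterior ℝ σ) {c : ℝ} (hc0 : 0 < c) (hc1 : c ≤ 1) :
    c • s ∈ intrinsicInterior ℝ σ := by
  rw [mem_II hσ.2.1] at hs ⊢
  obtain ⟨hspan, ε, hε, hball⟩ := hs
  refine ⟨Submodule.smul_mem _ _ hspan, c * ε, by positivity, fun y hy hdy => ?_⟩
  have h1 : c⁻¹ • y ∈ σ := by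
    refine hball _ (Submodule.smul_mem _ _ hy) ?_
    have heq : c⁻¹ • y - s = c⁻¹ • (y - c • s) := by
      rw [smul_sub, smul_smul, inv_mul_cancel₀ hc0.ne', one_smul]
    rw [dist_eq_norm, heq, norm_smul, Real.norm_eq_abs, abs_of_pos (by positivity)]
    rw [dist_eq_norm] at hdy
    calc c⁻¹ * ‖y - c • s‖ < c⁻¹ * (c * ε) := by
          apply mul_lt_mul_of_pos_left hdy (by positivity)
      _ = ε := by field_simp
  have h2 := face_smul_s12 hC hσ hc0.le hc1 h1
  simpa [smul_smul, mul_inv_cancel₀ hc0.ne'] using h2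

/-- Every point belongs to each of its `σ`-vicinities, and any finite
intersection of `σ`-vicinities contains a `σ`-vicinity of each of its points; hence the
`σ`-vicinities form a base for a topology on `E ⧸ span τ`. -/
theorem vicinities_form_basis {n : ℕ} (C τ σ : Set (Fin n → ℝ))
    (hC : IsPolyCone C) (hpointed : C ∩ (-C) = {0}) (hspan : C - C = Set.univ)
    (hτ : IsConeFace τ C) (hσ : IsConeFace σ C) (hts : τ ⊆ σ) :
    (∀ (p : (Fin n → ℝ) ⧸ Submodule.span ℝ τ)
       (V : Set ((Fin n → ℝ) ⧸ Submodule.span ℝ τ)), IsVic C σ τ p V → p ∈ V) ∧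
    (∀ (m : ℕ), 1 ≤ m →
      ∀ V : Fin m → Set ((Fin n → ℝ) ⧸ Submodule.span ℝ τ),
        (∀ i, ∃ p, IsVic C σ τ p (V i)) →
        ∀ w : (Fin n → ℝ) ⧸ Submodule.span ℝ τ, (∀ i, w ∈ V i) →
          ∃ W, IsVic C σ τ w W ∧ W ⊆ ⋂ i, V i) := by
  obtain ⟨h0C, haddC, hsmulC⟩ := cone_props hC
  have h0σ : (0 : Fin n → ℝ) ∈ σ := hσ.2.1
  have haddσ : ∀ x ∈ σ, ∀ y ∈ σ, x + y ∈ σ := hσ.2.2.1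
  have hIIadd : ∀ s ∈ intrinsicInterior ℝ σ, ∀ x ∈ σ, s + x ∈ intrinsicInterior ℝ σ :=
    fun s hs x hx => II_add h0σ haddσ hs hx
  have hIIsmul : ∀ s ∈ intrinsicInterior ℝ σ, ∀ c : ℝ, 0 < c → c ≤ 1 →
      c • s ∈ intrinsicInterior ℝ σ :=
    fun s hs c hc0 hc1 => II_smul hC hσ hs hc0 hc1
  have hmemII : ∀ x : Fin n → ℝ, x ∈ intrinsicInterior ℝ σ ↔ x ∈ Submodule.span ℝ σ ∧
      ∃ ε > 0, ∀ y, y ∈ Submodule.span ℝ σ → dist y x < ε → y ∈ σ :=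
    fun x => mem_II h0σ
  constructor
  · rintro p V ⟨u, w, hπw, hws, rfl⟩
    refine ⟨u + (w - u) + 0, ?_, ?_⟩
    · exact Set.add_mem_add (Set.add_mem_add rfl hws) h0C
    · rw [show u + (w - u) + 0 = w from by abel]
      exact hπw
  · intro m hm Vs hV w hw
    set π := (Submodule.span ℝ τ).mkQ with hπdef
    have key : ∀ i, ∃ u s c, s ∈ intrinsicInterior ℝ σ ∧ c ∈ C ∧
        π (u + s + c) = w ∧
        Vs i = π '' ({u} + intrinsicInterior ℝ σ + C) := by
      intro i
      obtain ⟨p, u, w', hpw, hws, hVeq⟩ := hV i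
      have hwi := hw i
      rw [hVeq] at hwi
      obtain ⟨x, hx, hπx⟩ := hwi
      rw [Set.mem_add] at hx
      obtain ⟨a, ha, c, hc, rfl⟩ := hx
      rw [Set.mem_add] at ha
      obtain ⟨u2, hu2, s, hs, rfl⟩ := ha
      rw [Set.mem_singleton_iff] at hu2
      subst hu2
      exact ⟨u2, s, c, hs, hc, hπx, hVeq⟩
    choose u s c hsII hcC hπw hVeq using key
    have i₀ : Fin m := ⟨0, hm⟩
    set w₀ := u i₀ + s i₀ + c i₀ with hw₀def
    have hπw₀ : π w₀ = w := hπw i₀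
    have ht : ∀ i, (u i + s i + c i) - w₀ ∈ Submodule.span ℝ τ := by
      intro i
      have h : π (u i + s i + c i) = π w₀ := (hπw i).trans hπw₀.symm
      rwa [hπdef, Submodule.mkQ_apply, Submodule.mkQ_apply, Submodule.Quotient.eq] at h
    -- choose ε i for each i
    have hchar := fun i => (hmemII (s i)).1 (hsII i)
    choose hspan ε hεpos hball using hchar
    -- choose δ
    obtain ⟨δ, hδ0, hδ1, hδ⟩ : ∃ δ : ℝ, 0 < δ ∧ δ ≤ 1 ∧ ∀ i, δ * ‖s i₀‖ < ε i := by
      have hne : (Finset.univ : Finset (Fin m)).Nonempty := ⟨i₀, Finset.mem_univ _⟩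
      set e := Finset.univ.inf' hne ε with he_def
      have he : ∀ i, e ≤ ε i := fun i => Finset.inf'_le _ (Finset.mem_univ _)
      have he0 : 0 < e := by
        obtain ⟨j, -, hj⟩ := Finset.exists_mem_eq_inf' hne ε
        rw [he_def, hj]
        exact hεpos j
      set K := ‖s i₀‖ + 1 with hK_def
      have hK : 0 < K := by positivity
      refine ⟨min 1 (e / (2 * K)), lt_min one_pos (by positivity), min_le_left _ _, fun i => ?_⟩
      have h1 : min 1 (e / (2 * K)) ≤ e / (2 * K) := min_le_right _ _
      have h2 : 0 < min 1 (e / (2 * K)) := lt_min one_pos (by positivity)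
      have h3 : ‖s i₀‖ < K := by rw [hK_def]; linarith
      have h4 : (0:ℝ) ≤ ‖s i₀‖ := norm_nonneg _
      have h5 := he i
      have h6 : (min 1 (e / (2 * K))) * ‖s i₀‖ ≤ (e / (2 * K)) * ‖s i₀‖ :=
        mul_le_mul_of_nonneg_right h1 h4
      have h7 : (e / (2 * K)) * ‖s i₀‖ < (e / (2 * K)) * K :=
        mul_lt_mul_of_pos_left h3 (by positivity)
      have h8 : (e / (2 * K)) * K = e / 2 := by field_simp
      linarith
    set sδ := δ • s i₀ with hsδdef
    have hsδII : sδ ∈ intrinsicInterior ℝ σ := hIIsmul _ (hsII i₀) δ hδ0 hδ1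
    have hsub : ∀ i, s i - sδ ∈ σ := by
      intro i
      refine hball i _ (Submodule.sub_mem _ (hspan i)
        (Submodule.smul_mem _ _ (hspan i₀))) ?_
      rw [dist_eq_norm, show s i - sδ - s i = -(δ • s i₀) from by rw [hsδdef]; abel,
        norm_neg, norm_smul, Real.norm_eq_abs, abs_of_pos hδ0]
      exact hδ i
    set u' := w₀ - sδ with hu'def
    refine ⟨π '' ({u'} + intrinsicInterior ℝ σ + C), ⟨u', w₀, hπw₀, ?_, rfl⟩, ?_⟩
    · rw [show w₀ - u' = sδ from by rw [hu'def]; abel]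
      exact hsδII
    · rintro z ⟨x, hx, rfl⟩
      rw [Set.mem_add] at hx
      obtain ⟨a, ha, c', hc', rfl⟩ := hx
      rw [Set.mem_add] at ha
      obtain ⟨u'', hu'', s', hs', rfl⟩ := ha
      rw [Set.mem_singleton_iff] at hu''
      subst hu''
      rw [Set.mem_iInter]
      intro i
      rw [hVeq i]
      refine ⟨u i + ((s i - sδ) + s') + (c i + c'), ?_, ?_⟩
      · exact Set.add_mem_add (Set.add_mem_add rfl
          (by rw [show s i - sδ + s' = s' + (s i - sδ) from add_comm _ _]; exact hIIadd _ hs' _ (hsub i))) (haddC _ (hcC i) _ hc')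
      · rw [hπdef, Submodule.mkQ_apply, Submodule.mkQ_apply, Submodule.Quotient.eq]
        have := ht i
        rwa [show u i + ((s i - sδ) + s') + (c i + c') - (u' + s' + c')
            = u i + s i + c i - w₀ from by rw [hu'def]; abel]
end

section
/- Let C be a pointed, spanning polyhedral cone in E = ℝⁿ, let τ be a face of C, and let π : E → E/span_ℝ τ be the quotient map. Then: (i) the image cone π(C) is pointed, i.e., π(C) ∩ (−π(C)) = {0}; and (ii) the assignment σ ↦ π(σ) is a bijection from the set of faces of C containing τ onto the set of faces of π(C) (faces of π(C) defined by the same condition: subsets of π(C) containing 0, closed under addition, such that x, y ∈ π(C) with x + y in the subset forces x and y in the subset), and this bijection is an order isomorphism for inclusion: σ ⊆ σ' iff π(σ) ⊆ π(σ'). -/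
open Pointwise

section aux
variable {n : ℕ} {C τ : Set (Fin n → ℝ)}

lemma poly_add (hC : IsPolyCone C) {x y} (hx : x ∈ C) (hy : y ∈ C) : x + y ∈ C := by
  obtain ⟨m, ℓ, rfl⟩ := hC
  intro i; simpa [map_add] using add_nonneg (hx i) (hy i)

lemma poly_smul (hC : IsPolyCone C) {r : ℝ} (hr : 0 ≤ r) {x} (hx : x ∈ C) : r • x ∈ C := by
  obtain ⟨m, ℓ, rfl⟩ := hC
  intro i; simpa [map_smul] using mul_nonneg hr (hx i)

lemma face_smul_s17 (hC : IsPolyCone C) (hτ : IsConeFace τ C) {r : ℝ} (hr : 0 ≤ r)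
    {x} (hx : x ∈ τ) : r • x ∈ τ := by
  obtain ⟨hsub, h0, hadd, hface⟩ := hτ
  have key : ∀ r : ℝ, 0 ≤ r → r ≤ 1 → ∀ x ∈ τ, r • x ∈ τ := by
    intro r hr0 hr1 x hx
    have h1 : r • x ∈ C := poly_smul hC hr0 (hsub hx)
    have h2 : (1 - r) • x ∈ C := poly_smul hC (by linarith) (hsub hx)
    have hsum : r • x + (1 - r) • x ∈ τ := by
      have e : r • x + (1 - r) • x = x := by module
      rw [e]; exact hx
    exact (hface _ h1 _ h2 hsum).1
  have nat_key : ∀ k : ℕ, ∀ x ∈ τ, (k : ℝ) • x ∈ τ := by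
    intro k
    induction k with
    | zero => intro x hx; simpa using h0
    | succ k ih =>
      intro x hx
      have := hadd _ (ih x hx) _ hx
      have e : ((k : ℝ) + 1) • x = (k : ℝ) • x + x := by module
      rw [Nat.cast_succ, e]
      exact this
  set k := ⌊r⌋₊ with hkdef
  have hk : (k : ℝ) ≤ r := Nat.floor_le hr
  have hf0 : 0 ≤ r - k := by linarith
  have hf1 : r - k ≤ 1 := by
    have := Nat.lt_floor_add_one r
    push_cast at this ⊢
    linarith
  have := hadd _ (nat_key k x hx) _ (key _ hf0 hf1 x hx)
  have e : (k : ℝ) • x + (r - k) • x = r • x := by module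
  rwa [e] at this

lemma span_eq_diff (hC : IsPolyCone C) (hτ : IsConeFace τ C) :
    ∀ v ∈ Submodule.span ℝ τ, ∃ s ∈ τ, ∃ t ∈ τ, v = s - t := by
  intro v hv
  induction hv using Submodule.span_induction with
  | mem x hx => exact ⟨x, hx, 0, hτ.2.1, by simp⟩
  | zero => exact ⟨0, hτ.2.1, 0, hτ.2.1, by simp⟩
  | add x y _ _ ihx ihy =>
      obtain ⟨s, hs, t, ht, rfl⟩ := ihx
      obtain ⟨s', hs', t', ht', rfl⟩ := ihy
      exact ⟨s + s', hτ.2.2.1 _ hs _ hs', t + t', hτ.2.2.1 _ ht _ ht', by abel⟩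
  | smul r x _ ih =>
      obtain ⟨s, hs, t, ht, rfl⟩ := ih
      rcases le_or_gt 0 r with h | h
      · exact ⟨r • s, face_smul_s17 hC hτ h hs, r • t, face_smul_s17 hC hτ h ht, by module⟩
      · exact ⟨(-r) • t, face_smul_s17 hC hτ (by linarith) ht,
          (-r) • s, face_smul_s17 hC hτ (by linarith) hs, by module⟩

/-- Pullback lemma: if `x ∈ C` and `π x ∈ π σ'` for a face `σ' ⊇ τ`, then `x ∈ σ'`. -/
lemma pull (hC : IsPolyCone C) (hτ : IsConeFace τ C) {σ' : Set (Fin n → ℝ)}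
    (hσ' : IsConeFace σ' C) (hτσ' : τ ⊆ σ') {x} (hx : x ∈ C)
    (h : (Submodule.span ℝ τ).mkQ x ∈ (Submodule.span ℝ τ).mkQ '' σ') : x ∈ σ' := by
  obtain ⟨z, hz, hmk⟩ := h
  rw [Submodule.mkQ_apply, Submodule.mkQ_apply, Submodule.Quotient.eq] at hmk
  obtain ⟨s, hs, t, ht, hst⟩ := span_eq_diff hC hτ _ hmk
  have hxs : x + s = z + t := by
    have : z - x = s - t := hst
    linear_combination -this
  have hmem : x + s ∈ σ' := by
    rw [hxs]; exact hσ'.2.2.1 _ hz _ (hτσ' ht)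
  exact (hσ'.2.2.2 _ hx _ (hτ.1 hs) hmem).1

end aux

/-- The image of `C` in `E ⧸ span τ` is a pointed cone, and
`σ ↦ π(σ)` is an inclusion-preserving bijection from the faces of `C` containing `τ`
onto the faces of `π(C)`. -/
theorem quotient_cone_faces {n : ℕ} (C τ : Set (Fin n → ℝ))
    (hC : IsPolyCone C) (hpointed : C ∩ (-C) = {0}) (hspan : C - C = Set.univ)
    (hτ : IsConeFace τ C) :
    ((Submodule.span ℝ τ).mkQ '' C ∩ (-((Submodule.span ℝ τ).mkQ '' C)) = {0}) ∧
    (∀ σ : Set (Fin n → ℝ), IsConeFace σ C → τ ⊆ σ →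
      IsConeFace ((Submodule.span ℝ τ).mkQ '' σ) ((Submodule.span ℝ τ).mkQ '' C)) ∧
    (∀ σ σ' : Set (Fin n → ℝ), IsConeFace σ C → τ ⊆ σ → IsConeFace σ' C → τ ⊆ σ' →
      (Submodule.span ℝ τ).mkQ '' σ = (Submodule.span ℝ τ).mkQ '' σ' → σ = σ') ∧
    (∀ F : Set ((Fin n → ℝ) ⧸ Submodule.span ℝ τ),
      IsConeFace F ((Submodule.span ℝ τ).mkQ '' C) →
        ∃ σ : Set (Fin n → ℝ), IsConeFace σ C ∧ τ ⊆ σ ∧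
          (Submodule.span ℝ τ).mkQ '' σ = F) ∧
    (∀ σ σ' : Set (Fin n → ℝ), IsConeFace σ C → τ ⊆ σ → IsConeFace σ' C → τ ⊆ σ' →
      (σ ⊆ σ' ↔ (Submodule.span ℝ τ).mkQ '' σ ⊆ (Submodule.span ℝ τ).mkQ '' σ')) := by
  set π := (Submodule.span ℝ τ).mkQ with hπ
  have h0C : (0 : Fin n → ℝ) ∈ C := hτ.1 hτ.2.1
  have hτmem : ∀ t ∈ τ, π t = 0 := fun t ht => by
    rw [hπ, Submodule.mkQ_apply, Submodule.Quotient.mk_eq_zero]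
    exact Submodule.subset_span ht
  -- order-iso backward direction, the workhorse
  have key : ∀ σ σ' : Set (Fin n → ℝ), IsConeFace σ C → IsConeFace σ' C → τ ⊆ σ' →
      π '' σ ⊆ π '' σ' → σ ⊆ σ' := by
    intro σ σ' hσ hσ' hτσ' himg x hx
    exact pull hC hτ hσ' hτσ' (hσ.1 hx) (himg ⟨x, hx, rfl⟩)
  refine ⟨?_, ?_, ?_, ?_, ?_⟩
  · -- pointedness
    apply Set.eq_singleton_iff_unique_mem.2
    constructor
    · constructor
      · exact ⟨0, h0C, by simp⟩
      · rw [Set.mem_neg]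
        exact ⟨0, h0C, by simp⟩
    · rintro p ⟨⟨x, hx, rfl⟩, hneg⟩
      rw [Set.mem_neg] at hneg
      obtain ⟨y, hy, hyeq⟩ := hneg
      have hsum : π (x + y) = 0 := by
        rw [map_add, hyeq]; abel
      rw [hπ, Submodule.mkQ_apply, Submodule.Quotient.mk_eq_zero] at hsum
      obtain ⟨s, hs, t, ht, hst⟩ := span_eq_diff hC hτ _ hsum
      have hmem : x + (y + t) ∈ τ := by
        have e : x + (y + t) = s := by linear_combination hst
        rw [e]; exact hs
      have hx' : x ∈ τ := (hτ.2.2.2 _ hx _ (poly_add hC hy (hτ.1 ht)) hmem).1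
      exact hτmem _ hx'
  · -- image is a face
    intro σ hσ hτσ
    refine ⟨Set.image_mono hσ.1, ⟨0, hτσ hτ.2.1, map_zero _⟩, ?_, ?_⟩
    · rintro _ ⟨x, hx, rfl⟩ _ ⟨y, hy, rfl⟩
      exact ⟨x + y, hσ.2.2.1 _ hx _ hy, map_add _ _ _⟩
    · rintro _ ⟨x, hx, rfl⟩ _ ⟨y, hy, rfl⟩ hsum
      rw [← map_add] at hsum
      have hxy : x + y ∈ σ := pull hC hτ hσ hτσ (poly_add hC hx hy) hsum
      exact ⟨⟨x, (hσ.2.2.2 _ hx _ hy hxy).1, rfl⟩, ⟨y, (hσ.2.2.2 _ hx _ hy hxy).2, rfl⟩⟩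
  · -- injectivity
    intro σ σ' hσ hτσ hσ' hτσ' heq
    exact Set.Subset.antisymm (key σ σ' hσ hσ' hτσ' heq.le) (key σ' σ hσ' hσ hτσ heq.ge)
  · -- surjectivity
    intro F hF
    refine ⟨C ∩ π ⁻¹' F, ⟨Set.inter_subset_left, ⟨h0C, by simpa using hF.2.1⟩, ?_, ?_⟩, ?_, ?_⟩
    · rintro x ⟨hxC, hxF⟩ y ⟨hyC, hyF⟩
      exact ⟨poly_add hC hxC hyC, by
        simp only [Set.mem_preimage, map_add]
        exact hF.2.2.1 _ hxF _ hyF⟩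
    · rintro x hxC y hyC ⟨hxyC, hxyF⟩
      rw [Set.mem_preimage, map_add] at hxyF
      have := hF.2.2.2 _ ⟨x, hxC, rfl⟩ _ ⟨y, hyC, rfl⟩ hxyF
      exact ⟨⟨hxC, this.1⟩, ⟨hyC, this.2⟩⟩
    · intro t ht
      exact ⟨hτ.1 ht, by simpa [Set.mem_preimage, hτmem _ ht] using hF.2.1⟩
    · apply Set.Subset.antisymm
      · rintro _ ⟨x, ⟨_, hxF⟩, rfl⟩
        exact hxF
      · intro p hp
        obtain ⟨x, hxC, rfl⟩ := hF.1 hp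
        exact ⟨x, ⟨hxC, hp⟩, rfl⟩
  · -- order iso
    intro σ σ' hσ hτσ hσ' hτσ'
    exact ⟨fun h => Set.image_mono h, key σ σ' hσ hσ' hτσ'⟩
end

section
/- Let Q₊ ⊆ ℤⁿ be a finitely generated submonoid with Q₊ ∩ (−Q₊) = {0}, and let I ⊆ ℤⁿ be an interval (the intersection of an upset and a downset for the order x ≼ y iff y − x ∈ Q₊). Then for every b ∈ I there exist a point a ∈ I with b ≼ a and a face τ of Q₊ such that (a + Q₊) ∩ I = a + τ; that is, every element of I precedes a closed cogenerator of I along some face. -/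
open Pointwise

/-- In a discrete polyhedral group, every element of an interval `I`
precedes a closed cogenerator of `I` along some face. -/
theorem discrete_exists_closed_cogenerator {n : ℕ} (S : AddSubmonoid (Fin n → ℤ))
    (hFG : S.FG) (hpointed : (S : Set (Fin n → ℤ)) ∩ (-(S : Set (Fin n → ℤ))) = {0})
    (I : Set (Fin n → ℤ))
    (hI : ∀ x y z : Fin n → ℤ, x ∈ I → z ∈ I → y - x ∈ S → z - y ∈ S → y ∈ I)
    (b : Fin n → ℤ) (hb : b ∈ I) :
    ∃ a ∈ I, ∃ τ : Set (Fin n → ℤ), IsConeFace τ (S : Set (Fin n → ℤ)) ∧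
      a - b ∈ S ∧ ({a} + (S : Set (Fin n → ℤ))) ∩ I = {a} + τ := by
  clear hpointed
  obtain ⟨T, hT⟩ := hFG
  -- index type and evaluation map
  set π : ({x // x ∈ T} → ℕ) → (Fin n → ℤ) := fun v => ∑ i, v i • (i : Fin n → ℤ) with hπ
  have hTS : ∀ x ∈ T, x ∈ S := fun x hx => by
    rw [← hT]; exact AddSubmonoid.subset_closure hx
  have hπS : ∀ v, π v ∈ S := fun v =>
    sum_mem fun i _ => AddSubmonoid.nsmul_mem _ (hTS i.1 i.2) _
  have hπadd : ∀ v u, π (v + u) = π v + π u := by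
    intro v u
    simp only [hπ, Pi.add_apply, add_nsmul, Finset.sum_add_distrib]
  have hπsurj : ∀ s ∈ S, ∃ v, π v = s := by
    intro s hs
    rw [← hT] at hs
    obtain ⟨l, hl, hsum⟩ := AddSubmonoid.exists_multiset_of_mem_closure hs
    refine ⟨fun i => l.count i.1, ?_⟩
    have h1 : π (fun i => l.count i.1) = ∑ x ∈ T, l.count x • x := by
      rw [hπ]
      exact T.sum_attach (fun x => l.count x • x)
    have h2 : ∑ a ∈ l.toFinset, l.count a • a = ∑ x ∈ T, l.count x • x := by
      refine Finset.sum_subset ?_ ?_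
      · intro x hx
        exact hl x (Multiset.mem_toFinset.mp hx)
      · intro x _ hx
        simp [Multiset.count_eq_zero_of_notMem (fun h => hx (Multiset.mem_toFinset.mpr h))]
    have h3 : l.sum = ∑ a ∈ l.toFinset, l.count a • a := by
      simpa using Finset.sum_multiset_map_count l id
    rw [h1, ← h2, ← h3, hsum]
  set K : Set ({x // x ∈ T} → ℕ) := {v | b + π v ∈ I} with hK
  set U : ({x // x ∈ T} → ℕ) → Set ({x // x ∈ T} → ℕ) := fun v => {u | v + u ∈ K} with hU
  have hdown : ∀ v : {x // x ∈ T} → ℕ, ∀ u' u, u' ≤ u → u ∈ U v → u' ∈ U v := by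
    intro v u' u hle hu
    have hsplit : v + u = (v + u') + (u - u') := by
      funext i
      have h : u' i ≤ u i := hle i
      simp only [Pi.add_apply, Pi.sub_apply]
      omega
    simp only [hU, hK, Set.mem_setOf_eq] at hu ⊢
    refine hI b (b + π (v + u')) (b + π (v + u)) hb hu ?_ ?_
    · simpa using hπS (v + u')
    · have : b + π (v + u) - (b + π (v + u')) = π (u - u') := by
        rw [hsplit, hπadd]; ring
      rw [this]; exact hπS _
  -- existence of minimal U
  have hmin : ∃ v ∈ K, ∀ w ∈ K, U w ⊆ U v → U v ⊆ U w := by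
    by_contra h
    push_neg at h
    have h0 : (0 : {x // x ∈ T} → ℕ) ∈ K := by
      simp only [hK, Set.mem_setOf_eq, hπ]
      simpa using hb
    choose f hf1 hf2 hf3 using h
    set g : ℕ → {v // v ∈ K} := fun m => Nat.rec ⟨0, h0⟩ (fun _ p => ⟨f p.1 p.2, hf1 p.1 p.2⟩) m with hg
    have hchain : ∀ m, U (g (m+1)).1 ⊆ U (g m).1 ∧ ¬ U (g m).1 ⊆ U (g (m+1)).1 := by
      intro m
      exact ⟨hf2 _ (g m).2, hf3 _ (g m).2⟩
    choose x hx1 hx2 using fun m => Set.not_subset.mp (hchain m).2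
    have hbad : ∀ i j, i < j → ¬ x i ≤ x j := by
      intro i j hij hle
      have hxj : x j ∈ U (g (i+1)).1 := by
        have : ∀ m, i < m → U (g m).1 ⊆ U (g (i+1)).1 := by
          intro m hm
          induction m with
          | zero => omega
          | succ k ih =>
            rcases Nat.lt_or_ge i k with h' | h'
            · exact (hchain k).1.trans (ih h')
            · have : k = i := by omega
              subst this; exact subset_rfl
        exact this j hij (hx1 j)
      exact hx2 i (hdown _ _ _ hle hxj)
    obtain ⟨i, j, hij, hle⟩ := (Set.IsPWO.pi (α := fun _ : {x // x ∈ T} => ℕ) (s := fun _ => Set.univ) (fun _ => Set.isPWO_of_wellQuasiOrderedLE _)).exists_lt (f := x) (fun _ => Set.mem_univ_pi.2 fun _ => Set.mem_univ _)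
    exact hbad i j hij hle
  obtain ⟨v₀, hv₀K, hv₀⟩ := hmin
  refine ⟨b + π v₀, hv₀K, {t | t ∈ S ∧ b + π v₀ + t ∈ I}, ?_, by simpa using hπS v₀, ?_⟩
  · refine ⟨fun t ht => ht.1, ⟨S.zero_mem, by simpa using (show b + π v₀ ∈ I from hv₀K)⟩, ?_, ?_⟩
    · -- closed under addition, uses minimality
      rintro t ⟨htS, htI⟩ u ⟨huS, huI⟩
      obtain ⟨vt, rfl⟩ := hπsurj t htS
      obtain ⟨vu, rfl⟩ := hπsurj u huS
      have h1 : v₀ + vt ∈ K := by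
        simp only [hK, Set.mem_setOf_eq, hπadd]
        rwa [← add_assoc]
      have h2 : U (v₀ + vt) ⊆ U v₀ := by
        intro u hu
        simp only [hU, hK, Set.mem_setOf_eq] at hu ⊢
        refine hI b (b + π (v₀ + u)) (b + π (v₀ + vt + u)) hb hu ?_ ?_
        · simpa using hπS _
        · have : b + π (v₀ + vt + u) - (b + π (v₀ + u)) = π vt := by
            simp only [hπadd]; ring
          rw [this]; exact hπS vt
      have h3 : U v₀ ⊆ U (v₀ + vt) := hv₀ _ h1 h2
      have h4 : vu ∈ U v₀ := by
        simp only [hU, hK, Set.mem_setOf_eq, hπadd]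
        rwa [← add_assoc]
      have h5 := h3 h4
      simp only [hU, hK, Set.mem_setOf_eq] at h5
      refine ⟨S.add_mem (hπS vt) (hπS vu), ?_⟩
      have e : b + π v₀ + (π vt + π vu) = b + π (v₀ + vt + vu) := by
        simp only [hπadd]; ring
      rw [e]; exact h5
    · -- split
      rintro t htS u huS ⟨_, hI'⟩
      have hv₀I : b + π v₀ ∈ I := hv₀K
      have ht' : b + π v₀ + t ∈ I := by
        refine hI (b + π v₀) (b + π v₀ + t) (b + π v₀ + (t + u)) hv₀I hI' (by simpa using htS) ?_
        have : b + π v₀ + (t + u) - (b + π v₀ + t) = u := by ring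
        rw [this]; exact huS
      have hu' : b + π v₀ + u ∈ I := by
        refine hI (b + π v₀) (b + π v₀ + u) (b + π v₀ + (t + u)) hv₀I hI' (by simpa using huS) ?_
        have : b + π v₀ + (t + u) - (b + π v₀ + u) = t := by ring
        rw [this]; exact htS
      exact ⟨⟨htS, ht'⟩, ⟨huS, hu'⟩⟩
  · ext x
    simp only [Set.mem_inter_iff, Set.singleton_add, Set.image_add_left, Set.mem_preimage,
      Set.mem_setOf_eq, SetLike.mem_coe]
    constructor
    · rintro ⟨hs, hxI⟩
      refine ⟨hs, ?_⟩
      have : b + π v₀ + (-(b + π v₀) + x) = x := by ring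
      rwa [this]
    · rintro ⟨hs, hxI⟩
      refine ⟨hs, ?_⟩
      have : b + π v₀ + (-(b + π v₀) + x) = x := by ring
      rwa [this] at hxI
end

section
/- Let Q₊ ⊆ ℤⁿ be a finitely generated submonoid with Q₊ ∩ (−Q₊) = {0}, and let I ⊆ ℤⁿ be an interval. For each face τ of Q₊ set G_τ := {a ∈ I | (a + Q₊) ∩ I = a + τ} (the closed cogenerators of I along τ) and I^τ := ⋃_{a ∈ G_τ} ((a + ⟨τ⟩ − Q₊) ∩ I), where ⟨τ⟩ is the subgroup of ℤⁿ generated by τ. Then: (i) I = ⋃_τ I^τ, the union over all faces τ of Q₊; and (ii) each I^τ is τ-coprimary in the sense that for every b ∈ I^τ there exists a ∈ I^τ with b ≼ a and (a + Q₊) ∩ I^τ = a + τ. -/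
open Pointwise

/-- The `τ`-coprimary part of an interval `I`: the union over the closed cogenerators `a`
of `I` along `τ` of the sets `(a + ⟨τ⟩ - Q₊) ∩ I`. -/
def coprimaryPart {n : ℕ} (S : AddSubmonoid (Fin n → ℤ)) (I τ : Set (Fin n → ℤ)) :
    Set (Fin n → ℤ) :=
  ⋃ a ∈ {a ∈ I | ({a} + (S : Set (Fin n → ℤ))) ∩ I = {a} + τ},
    (({a} + (AddSubgroup.closure τ : Set (Fin n → ℤ)) - (S : Set (Fin n → ℤ))) ∩ I)

lemma downset_minimal {ι : Type} [Finite ι] (𝒮 : Set (Set (ι → ℕ)))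
    (hdown : ∀ X ∈ 𝒮, ∀ u v : ι → ℕ, u ≤ v → v ∈ X → u ∈ X)
    (hne : 𝒮.Nonempty) : ∃ X ∈ 𝒮, ∀ Y ∈ 𝒮, Y ⊆ X → Y = X := by
  by_contra hcon
  push_neg at hcon
  obtain ⟨X0, hX0⟩ := hne
  have step : ∀ X : {X // X ∈ 𝒮}, ∃ Y : {X // X ∈ 𝒮}, Y.1 ⊆ X.1 ∧ Y.1 ≠ X.1 := by
    rintro ⟨X, hX⟩
    obtain ⟨Y, hY, hsub, hne'⟩ := hcon X hX
    exact ⟨⟨Y, hY⟩, hsub, hne'⟩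
  let f : ℕ → {X // X ∈ 𝒮} :=
    fun k => Nat.rec ⟨X0, hX0⟩ (fun _ X => Classical.choose (step X)) k
  have hf : ∀ k, (f (k + 1)).1 ⊆ (f k).1 ∧ (f (k + 1)).1 ≠ (f k).1 := fun k =>
    Classical.choose_spec (step (f k))
  have hchain : ∀ i j : ℕ, i ≤ j → (f j).1 ⊆ (f i).1 := by
    intro i j hij
    induction hij with
    | refl => exact subset_rfl
    | step h ih => exact fun x hx => ih ((hf _).1 hx)
  have hu : ∀ k, ∃ x, x ∈ (f k).1 ∧ x ∉ (f (k + 1)).1 := by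
    intro k
    obtain ⟨x, hx1, hx2⟩ := Set.exists_of_ssubset (((hf k).1).ssubset_of_ne (hf k).2)
    exact ⟨x, hx1, hx2⟩
  choose u hu1 hu2 using hu
  obtain ⟨i, j, hij, hle⟩ :=
    (Set.isPWO_of_wellQuasiOrderedLE (Set.univ : Set (ι → ℕ)))
      (fun k => ⟨u k, Set.mem_univ _⟩)
  exact hu2 i (hdown _ (f (i + 1)).2 _ _ hle (hchain (i + 1) j hij (hu1 j)))

lemma fg_rep {n : ℕ} (S : AddSubmonoid (Fin n → ℤ)) (hFG : S.FG) :
    ∃ (ι : Type) (_ : Finite ι) (φ : (ι → ℕ) → (Fin n → ℤ)),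
      (∀ u v, φ (u + v) = φ u + φ v) ∧ (∀ u, φ u ∈ S) ∧ (∀ s ∈ S, ∃ u, s = φ u) := by
  classical
  obtain ⟨F, hF⟩ := hFG
  refine ⟨{x // x ∈ F}, inferInstance,
    fun u => ∑ i : {x // x ∈ F}, u i • (i : Fin n → ℤ), ?_, ?_, ?_⟩
  · intro u v
    simp [add_smul, Finset.sum_add_distrib]
  · intro u
    refine S.sum_mem fun i _ => ?_
    have hiS : (i : Fin n → ℤ) ∈ S := by
      rw [← hF]; exact AddSubmonoid.subset_closure i.2
    exact nsmul_mem hiS (u i)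
  · intro s hs
    rw [← hF] at hs
    refine AddSubmonoid.closure_induction
      (motive := fun x _ => ∃ u : {x // x ∈ F} → ℕ, x = ∑ i : {x // x ∈ F}, u i • (i : Fin n → ℤ))
      ?_ ?_ ?_ hs
    · intro x hx
      refine ⟨Pi.single ⟨x, hx⟩ 1, ?_⟩
      rw [Finset.sum_eq_single (⟨x, hx⟩ : {x // x ∈ F})]
      · simp
      · intro b _ hb
        simp [Pi.single_eq_of_ne hb]
      · simp
    · exact ⟨0, by simp⟩
    · rintro x y hx hy ⟨u, rfl⟩ ⟨v, rfl⟩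
      exact ⟨u + v, by simp [add_smul, Finset.sum_add_distrib]⟩

lemma exists_cogen {n : ℕ} (S : AddSubmonoid (Fin n → ℤ)) (hFG : S.FG)
    (I : Set (Fin n → ℤ))
    (hI : ∀ x y z : Fin n → ℤ, x ∈ I → z ∈ I → y - x ∈ S → z - y ∈ S → y ∈ I)
    {b : Fin n → ℤ} (hb : b ∈ I) :
    ∃ a, a ∈ I ∧ a - b ∈ S ∧
      ∀ s ∈ S, ∀ s' ∈ S, a + s ∈ I → a + s' ∈ I → a + (s + s') ∈ I := by
  obtain ⟨ι, _, φ, hφadd, hφmem, hφsurj⟩ := fg_rep S hFG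
  set J : Set (Fin n → ℤ) := {x | x ∈ I ∧ x - b ∈ S} with hJ
  have hbJ : b ∈ J := ⟨hb, by simpa using S.zero_mem⟩
  set E : (Fin n → ℤ) → Set (ι → ℕ) := fun a => {u | a + φ u ∈ I} with hE
  have hEdown : ∀ a ∈ J, ∀ u v : ι → ℕ, u ≤ v → v ∈ E a → u ∈ E a := by
    intro a ha u v huv hv
    have hw : v = u + (v - u) := by
      funext i
      simp only [Pi.add_apply, Pi.sub_apply]
      have h := (Pi.le_def.mp huv) i
      omega
    have h2 : φ v = φ u + φ (v - u) := by rw [← hφadd, ← hw]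
    refine hI a (a + φ u) (a + φ v) ha.1 hv ?_ ?_
    · simpa using hφmem u
    · have h3 : a + φ v - (a + φ u) = φ (v - u) := by rw [h2]; ring
      rw [h3]; exact hφmem _
  obtain ⟨X, ⟨a, haJ, rfl⟩, hmin⟩ :=
    downset_minimal {X | ∃ a ∈ J, X = E a}
      (by rintro X ⟨a, ha, rfl⟩; exact hEdown a ha) ⟨E b, b, hbJ, rfl⟩
  refine ⟨a, haJ.1, haJ.2, ?_⟩
  intro s hs s' hs' hsI hs'I
  have haJ' : a + s ∈ J := by
    refine ⟨hsI, ?_⟩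
    have h4 : a + s - b = s + (a - b) := by ring
    rw [h4]; exact S.add_mem hs haJ.2
  have hsub : E (a + s) ⊆ E a := by
    intro u hu
    have hu' : a + s + φ u ∈ I := hu
    refine hI a (a + φ u) (a + s + φ u) haJ.1 hu' ?_ ?_
    · simpa using hφmem u
    · have h5 : a + s + φ u - (a + φ u) = s := by ring
      rw [h5]; exact hs
  have heq : E (a + s) = E a := hmin (E (a + s)) ⟨a + s, haJ', rfl⟩ hsub
  obtain ⟨u', hu'⟩ := hφsurj s' hs'
  have hm : u' ∈ E a := by
    show a + φ u' ∈ I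
    rw [← hu']; exact hs'I
  rw [← heq] at hm
  have hm' : a + s + φ u' ∈ I := hm
  have h6 : a + (s + s') = a + s + φ u' := by rw [← hu']; ring
  rw [h6]; exact hm'

lemma closure_face_sub {n : ℕ} {τ : Set (Fin n → ℤ)}
    (h0 : (0 : Fin n → ℤ) ∈ τ) (hadd : ∀ x ∈ τ, ∀ y ∈ τ, x + y ∈ τ) :
    ∀ t ∈ AddSubgroup.closure τ, ∃ u ∈ τ, ∃ v ∈ τ, t = u - v := by
  intro t ht
  let G : AddSubgroup (Fin n → ℤ) :=
    { carrier := {x | ∃ u ∈ τ, ∃ v ∈ τ, x = u - v}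
      zero_mem' := ⟨0, h0, 0, h0, by ring⟩
      add_mem' := by
        rintro x y ⟨u, hu, v, hv, rfl⟩ ⟨u', hu', v', hv', rfl⟩
        exact ⟨u + u', hadd _ hu _ hu', v + v', hadd _ hv _ hv', by ring⟩
      neg_mem' := by
        rintro x ⟨u, hu, v, hv, rfl⟩
        exact ⟨v, hv, u, hu, by ring⟩ }
  have hle : AddSubgroup.closure τ ≤ G :=
    (AddSubgroup.closure_le G).mpr (fun x hx => ⟨x, hx, 0, h0, by ring⟩)
  exact hle ht

lemma cogen_char {n : ℕ} {S : AddSubmonoid (Fin n → ℤ)} {I τ : Set (Fin n → ℤ)}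
    {a : Fin n → ℤ} (h : ({a} + (S : Set (Fin n → ℤ))) ∩ I = {a} + τ) :
    (∀ s, s ∈ S → a + s ∈ I → s ∈ τ) ∧ (∀ s, s ∈ τ → s ∈ S ∧ a + s ∈ I) := by
  constructor
  · intro s hs hsI
    have hx : a + s ∈ ({a} + (S : Set (Fin n → ℤ))) ∩ I :=
      ⟨Set.add_mem_add rfl hs, hsI⟩
    rw [h] at hx
    obtain ⟨x, hx1, s', hs', heq⟩ := Set.mem_add.mp hx
    rw [Set.mem_singleton_iff] at hx1
    subst hx1
    have : s' = s := by
      have := heq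
      exact add_left_cancel this
    rwa [← this]
  · intro s hs
    have hx : a + s ∈ {a} + τ := Set.add_mem_add rfl hs
    rw [← h] at hx
    obtain ⟨hx1, hx2⟩ := hx
    obtain ⟨x, hx3, s', hs', heq⟩ := Set.mem_add.mp hx1
    rw [Set.mem_singleton_iff] at hx3
    subst hx3
    have hss : s' = s := add_left_cancel heq
    rw [← hss]
    exact ⟨hs', by rwa [hss]⟩

/-- An interval in a discrete polyhedral group is the union over all
faces `τ` of its `τ`-coprimary parts, and each such part is `τ`-coprimary. -/
theorem discrete_canonical_primary_decomposition {n : ℕ} (S : AddSubmonoid (Fin n → ℤ))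
    (hFG : S.FG) (hpointed : (S : Set (Fin n → ℤ)) ∩ (-(S : Set (Fin n → ℤ))) = {0})
    (I : Set (Fin n → ℤ))
    (hI : ∀ x y z : Fin n → ℤ, x ∈ I → z ∈ I → y - x ∈ S → z - y ∈ S → y ∈ I) :
    (I = ⋃ τ ∈ {τ : Set (Fin n → ℤ) | IsConeFace τ (S : Set (Fin n → ℤ))},
        coprimaryPart S I τ) ∧
    (∀ τ : Set (Fin n → ℤ), IsConeFace τ (S : Set (Fin n → ℤ)) →
      ∀ b ∈ coprimaryPart S I τ, ∃ a ∈ coprimaryPart S I τ, a - b ∈ S ∧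
        ({a} + (S : Set (Fin n → ℤ))) ∩ coprimaryPart S I τ = {a} + τ) := by
  constructor
  · apply Set.Subset.antisymm
    · intro b hb
      obtain ⟨a, haI, hab, haddI⟩ := exists_cogen S hFG I hI hb
      set τ : Set (Fin n → ℤ) := {s | s ∈ S ∧ a + s ∈ I} with hτ
      have hface : IsConeFace τ (S : Set (Fin n → ℤ)) := by
        refine ⟨fun s hs => hs.1, ⟨S.zero_mem, by simpa using haI⟩, ?_, ?_⟩
        · intro x hx y hy
          exact ⟨S.add_mem hx.1 hy.1, haddI x hx.1 y hy.1 hx.2 hy.2⟩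
        · intro x hx y hy hxy
          constructor
          · refine ⟨hx, hI a (a + x) (a + (x + y)) haI hxy.2 (by simpa using hx) ?_⟩
            have h1 : a + (x + y) - (a + x) = y := by ring
            rw [h1]; exact hy
          · refine ⟨hy, hI a (a + y) (a + (x + y)) haI hxy.2 (by simpa using hy) ?_⟩
            have h1 : a + (x + y) - (a + y) = x := by ring
            rw [h1]; exact hx
      have hGeq : ({a} + (S : Set (Fin n → ℤ))) ∩ I = {a} + τ := by
        ext x
        constructor
        · rintro ⟨hx1, hx2⟩
          obtain ⟨y, hy, s, hs, heq⟩ := Set.mem_add.mp hx1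
          have hy' : y = a := hy
          rw [hy'] at heq
          refine Set.mem_add.mpr ⟨a, rfl, s, ⟨hs, ?_⟩, heq⟩
          rwa [heq]
        · intro hx
          obtain ⟨y, hy, s, hs, heq⟩ := Set.mem_add.mp hx
          have hy' : y = a := hy
          rw [hy'] at heq
          exact ⟨Set.mem_add.mpr ⟨a, rfl, s, hs.1, heq⟩, by rw [← heq]; exact hs.2⟩
      refine Set.mem_iUnion₂.mpr ⟨τ, hface, ?_⟩
      refine Set.mem_iUnion₂.mpr ⟨a, ⟨haI, hGeq⟩, ?_, hb⟩
      refine Set.mem_sub.mpr ⟨a + 0, Set.add_mem_add rfl ?_, a - b, hab, by ring⟩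
      exact (AddSubgroup.closure τ).zero_mem
    · intro x hx
      obtain ⟨τ, _, hx2⟩ := Set.mem_iUnion₂.mp hx
      obtain ⟨a, _, _, hxI⟩ := Set.mem_iUnion₂.mp hx2
      exact hxI
  · intro τ hface b hbmem
    obtain ⟨a₀, ha₀G, hbmem'⟩ := Set.mem_iUnion₂.mp hbmem
    obtain ⟨ha₀I, ha₀eq⟩ := ha₀G
    obtain ⟨hb1, hbI⟩ := hbmem'
    obtain ⟨p, hp, q, hq, hpq⟩ := Set.mem_sub.mp hb1
    obtain ⟨y, hy, t, ht, hpt⟩ := Set.mem_add.mp hp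
    have hy0 : y = a₀ := hy
    rw [hy0] at hpt
    obtain ⟨t₁, ht₁, t₂, ht₂, htt⟩ := closure_face_sub hface.2.1 hface.2.2.1 t ht
    obtain ⟨hfwd₀, hbwd₀⟩ := cogen_char ha₀eq
    have ht₁S : t₁ ∈ S := (hbwd₀ t₁ ht₁).1
    set a : Fin n → ℤ := a₀ + t₁ with ha
    have haI : a ∈ I := (hbwd₀ t₁ ht₁).2
    have hamem : a ∈ coprimaryPart S I τ := by
      refine Set.mem_iUnion₂.mpr ⟨a₀, ⟨ha₀I, ha₀eq⟩, ?_, haI⟩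
      refine Set.mem_sub.mpr ⟨a₀ + t₁, Set.add_mem_add rfl ?_, 0, S.zero_mem, by ring⟩
      exact AddSubgroup.subset_closure ht₁
    have habS : a - b ∈ S := by
      have hb' : b = a₀ + (t₁ - t₂) - q := by rw [← hpq, ← hpt, htt]
      have h7 : a - b = t₂ + q := by rw [hb', ha]; ring
      rw [h7]
      exact S.add_mem (hbwd₀ t₂ ht₂).1 hq
    refine ⟨a, hamem, habS, ?_⟩
    ext x
    constructor
    · rintro ⟨hx1, hx2⟩
      obtain ⟨y, hy, s, hsS, heq⟩ := Set.mem_add.mp hx1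
      have hya : y = a := hy
      rw [hya] at heq
      subst heq
      obtain ⟨a₁, ha₁G, hmem₁⟩ := Set.mem_iUnion₂.mp hx2
      obtain ⟨ha₁I, ha₁eq⟩ := ha₁G
      obtain ⟨hm1, hxI⟩ := hmem₁
      obtain ⟨p', hp', q', hq', hpq'⟩ := Set.mem_sub.mp hm1
      obtain ⟨y', hy', t', ht', hpt'⟩ := Set.mem_add.mp hp'
      have hy1 : y' = a₁ := hy'
      rw [hy1] at hpt'
      obtain ⟨u, hu, v, hv, htt'⟩ := closure_face_sub hface.2.1 hface.2.2.1 t' ht'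
      obtain ⟨hfwd₁, hbwd₁⟩ := cogen_char ha₁eq
      -- y2 := a₁ + t' = (a + s) + q'
      have hy2 : a₁ + t' = (a + s) + q' := by
        have := hpq'
        rw [← hpt'] at this
        rw [← this]; ring
      have hy2I : a₁ + t' ∈ I := by
        refine hI (a + s) (a₁ + t') (a₁ + u) hxI (hbwd₁ u hu).2 ?_ ?_
        · rw [hy2]; simpa using hq'
        · rw [htt']
          have h8 : a₁ + u - (a₁ + (u - v)) = v := by ring
          rw [h8]; exact (hbwd₁ v hv).1
      have hwτ : t₁ + (s + q') ∈ τ := by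
        refine hfwd₀ _ (S.add_mem ht₁S (S.add_mem hsS hq')) ?_
        have h9 : a₀ + (t₁ + (s + q')) = a₁ + t' := by rw [hy2, ha]; ring
        rw [h9]; exact hy2I
      have hsτ : s ∈ τ := by
        have h10 : s + (t₁ + q') ∈ τ := by
          have h11 : s + (t₁ + q') = t₁ + (s + q') := by ring
          rw [h11]; exact hwτ
        exact (hface.2.2.2 s hsS (t₁ + q') (S.add_mem ht₁S hq') h10).1
      exact Set.add_mem_add rfl hsτ
    · intro hx
      obtain ⟨y, hy, s, hsτ, heq⟩ := Set.mem_add.mp hx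
      have hya : y = a := hy
      rw [hya] at heq
      subst heq
      have hsS : s ∈ S := hface.1 hsτ
      have ht₁s : t₁ + s ∈ τ := hface.2.2.1 t₁ ht₁ s hsτ
      refine ⟨Set.add_mem_add rfl hsS, ?_⟩
      refine Set.mem_iUnion₂.mpr ⟨a₀, ⟨ha₀I, ha₀eq⟩, ?_, ?_⟩
      · refine Set.mem_sub.mpr ⟨a₀ + (t₁ + s), Set.add_mem_add rfl ?_, 0, S.zero_mem, by rw [ha]; ring⟩
        exact AddSubgroup.subset_closure ht₁s
      · have h12 : a + s = a₀ + (t₁ + s) := by rw [ha]; ring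
        rw [h12]
        exact (hbwd₀ _ ht₁s).2
end
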